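/- arXiv:1611.05070 — 2 statements merged into one kernel-verified Lean document; each statement's English description precedes it below -/
import Mathlib

section
/- For every dimension d ≥ 1, every k ≥ 1, and every λ > 0, the limit lim_{t→∞} \bar F_{k,λ}(t) exists and equals a_{k,λ} := inf_{t>0} \bar F_{k,λ}(t). -/
open MeasureTheory ProbabilityTheory Filter
open scoped ENNReal

noncomputable instance instDecEqEuclidean (d : ℕ) :
    DecidableEq (EuclideanSpace ℝ (Fin d)) := Classical.decEq _

/-- `maxColorable d k r V` is the maximum number of vertices of the geometric
graph `G_r(V)` (edges between distinct points of `V` at Euclidean distance at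
most `r`) that can be properly colored with `k` colors, i.e. the maximum
cardinality of a subset `S ⊆ V` admitting a proper `k`-coloring. -/
noncomputable def maxColorable (d k : ℕ) (r : ℝ)
    (V : Finset (EuclideanSpace ℝ (Fin d))) : ℕ :=
  sSup {m : ℕ | ∃ S : Finset (EuclideanSpace ℝ (Fin d)), S ⊆ V ∧ S.card = m ∧
    ∃ c : EuclideanSpace ℝ (Fin d) → Fin k,
      ∀ u ∈ S, ∀ v ∈ S, u ≠ v → dist u v ≤ r → c u ≠ c v}

/-- The unit cube `[0,1]^d`. -/
def unitCube (d : ℕ) : Set (EuclideanSpace ℝ (Fin d)) :=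
  {x | ∀ i, x i ∈ Set.Icc (0 : ℝ) 1}

/-- The uniform distribution on the unit cube `[0,1]^d` (Lebesgue measure
restricted to the cube, which has total mass one). -/
noncomputable def uniformCube (d : ℕ) : Measure (EuclideanSpace ℝ (Fin d)) :=
  volume.restrict (unitCube d)

/-- `EH d k r n = E[H_{k,r}(n)] = E[N_{k,r}({X_1,…,X_n})]` for `X_1,…,X_n`
i.i.d. uniform on the unit cube `[0,1]^d`. -/
noncomputable def EH (d k : ℕ) (r : ℝ) (n : ℕ) : ℝ :=
  ∫ x : Fin n → EuclideanSpace ℝ (Fin d),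
    (maxColorable d k r (Finset.image x Finset.univ) : ℝ)
    ∂(Measure.pi fun _ => uniformCube d)

/-- `EF d k lam t = E[F_{k,lam}(t)] = ∑_n P(Po(lam t^d) = n) E[H_{k,1/t}(n)]`,
the expected maximum number of `k`-colorable vertices of the unit-distance
geometric graph on a Poisson process of intensity `lam` in `[0,t]^d`. -/
noncomputable def EF (d k : ℕ) (lam t : ℝ) : ℝ :=
  ∑' n : ℕ, poissonPMFReal (Real.toNNReal (lam * t ^ d)) n * EH d k (1 / t) n

/-- The normalized expectation `\bar F_{k,lam}(t) = E[F_{k,lam}(t)]/(lam t^d)`. -/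
noncomputable def Fbar (d k : ℕ) (lam t : ℝ) : ℝ :=
  EF d k lam t / (lam * t ^ d)

/-- The constant `a_{k,lam} = inf_{t>0} \bar F_{k,lam}(t)`. -/
noncomputable def aConst (d k : ℕ) (lam : ℝ) : ℝ :=
  sInf {x : ℝ | ∃ t : ℝ, 0 < t ∧ x = Fbar d k lam t}

/-- The volume `V_d(r) = π^{d/2} r^d / Γ(d/2 + 1)` of the `d`-dimensional
Euclidean ball of radius `r`. -/
noncomputable def ballVol (d : ℕ) (r : ℝ) : ℝ :=
  Real.pi ^ ((d : ℝ) / 2) * r ^ d / Real.Gamma ((d : ℝ) / 2 + 1)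

/-! ### Auxiliary material -/

namespace PoissonFekete

abbrev Euc (d : ℕ) := EuclideanSpace ℝ (Fin d)

/-! #### Basic facts about `maxColorable` -/

def mcSet (d k : ℕ) (r : ℝ) (V : Finset (Euc d)) : Set ℕ :=
  {m : ℕ | ∃ S : Finset (Euc d), S ⊆ V ∧ S.card = m ∧
    ∃ c : Euc d → Fin k,
      ∀ u ∈ S, ∀ v ∈ S, u ≠ v → dist u v ≤ r → c u ≠ c v}

variable {d k : ℕ} {r : ℝ}

lemma maxColorable_eq (V : Finset (Euc d)) :
    maxColorable d k r V = sSup (mcSet d k r V) := rfl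

lemma mem_mcSet_le_card {V : Finset (Euc d)} {m : ℕ} (h : m ∈ mcSet d k r V) :
    m ≤ V.card := by
  obtain ⟨S, hS, hc, -⟩ := h
  exact hc ▸ Finset.card_le_card hS

lemma bddAbove_mcSet (V : Finset (Euc d)) : BddAbove (mcSet d k r V) :=
  ⟨V.card, fun _ h => mem_mcSet_le_card h⟩

lemma zero_mem_mcSet (hk : 1 ≤ k) (V : Finset (Euc d)) : 0 ∈ mcSet d k r V :=
  ⟨∅, by simp, by simp, fun _ => ⟨0, hk⟩, by simp⟩

lemma le_maxColorable {V : Finset (Euc d)} {m : ℕ} (h : m ∈ mcSet d k r V) :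
    m ≤ maxColorable d k r V :=
  le_csSup (bddAbove_mcSet V) h

lemma maxColorable_mem (hk : 1 ≤ k) (V : Finset (Euc d)) :
    maxColorable d k r V ∈ mcSet d k r V :=
  Nat.sSup_mem ⟨0, zero_mem_mcSet hk V⟩ (bddAbove_mcSet V)

lemma maxColorable_le_card (V : Finset (Euc d)) :
    maxColorable d k r V ≤ V.card := by
  rcases Set.eq_empty_or_nonempty (mcSet d k r V) with h | h
  · simp [maxColorable_eq, h]
  · exact mem_mcSet_le_card (Nat.sSup_mem h (bddAbove_mcSet V))

lemma mcSet_downward {V : Finset (Euc d)} {m m' : ℕ} (h : m ∈ mcSet d k r V)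
    (h' : m' ≤ m) : m' ∈ mcSet d k r V := by
  obtain ⟨S, hSV, hcard, c, hc⟩ := h
  obtain ⟨B, hBS, hBcard⟩ := Finset.exists_subset_card_eq (hcard ▸ h' : m' ≤ S.card)
  exact ⟨B, hBS.trans hSV, hBcard, c, fun u hu v hv => hc u (hBS hu) v (hBS hv)⟩

lemma le_maxColorable_iff (hk : 1 ≤ k) {V : Finset (Euc d)} {m : ℕ} :
    m ≤ maxColorable d k r V ↔ m ∈ mcSet d k r V :=
  ⟨fun h => mcSet_downward (maxColorable_mem hk V) h, le_maxColorable⟩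

/-- Subadditivity over any finite cover. -/
lemma maxColorable_le_sum_cover (hk : 1 ≤ k) {ι : Type*} (s : Finset ι)
    (P : ι → Set (Euc d)) [∀ i, DecidablePred (· ∈ P i)] (V : Finset (Euc d))
    (hcov : ∀ p ∈ V, ∃ i ∈ s, p ∈ P i) :
    maxColorable d k r V ≤
      ∑ i ∈ s, maxColorable d k r (V.filter (fun p => p ∈ P i)) := by
  classical
  obtain ⟨S, hSV, hcard, c, hc⟩ := maxColorable_mem hk (r := r) V
  calc maxColorable d k r V = S.card := hcard.symm
    _ ≤ (s.biUnion (fun i => S.filter (fun p => p ∈ P i))).card := by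
        apply Finset.card_le_card
        intro p hp
        obtain ⟨i, hi, hpi⟩ := hcov p (hSV hp)
        exact Finset.mem_biUnion.2 ⟨i, hi, Finset.mem_filter.2 ⟨hp, hpi⟩⟩
    _ ≤ ∑ i ∈ s, (S.filter (fun p => p ∈ P i)).card := Finset.card_biUnion_le
    _ ≤ _ := by
        apply Finset.sum_le_sum
        intro i _
        apply le_maxColorable
        refine ⟨S.filter (fun p => p ∈ P i), ?_, rfl, c, ?_⟩
        · exact Finset.filter_subset_filter _ hSV
        · intro u hu v hv
          exact hc u (Finset.mem_filter.1 hu).1 v (Finset.mem_filter.1 hv).1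

/-- Scaling invariance under a map that transforms distances. -/
lemma maxColorable_map (hk : 1 ≤ k) {r' : ℝ} (φ : Euc d → Euc d)
    (hφ : Function.Injective φ)
    (hdd : ∀ u v, dist (φ u) (φ v) ≤ r' ↔ dist u v ≤ r)
    (V : Finset (Euc d)) :
    maxColorable d k r V = maxColorable d k r' (V.image φ) := by
  classical
  apply le_antisymm
  · obtain ⟨S, hSV, hcard, c, hc⟩ := maxColorable_mem hk (r := r) V
    rw [← hcard]
    apply le_maxColorable
    refine ⟨S.image φ, Finset.image_subset_image hSV,
      Finset.card_image_of_injective _ hφ, c ∘ Function.invFun φ, ?_⟩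
    rintro u hu v hv huv hdist
    obtain ⟨a, ha, rfl⟩ := Finset.mem_image.1 hu
    obtain ⟨b, hb, rfl⟩ := Finset.mem_image.1 hv
    simp only [Function.comp_apply, Function.leftInverse_invFun hφ a,
      Function.leftInverse_invFun hφ b]
    exact hc a ha b hb (fun h => huv (h ▸ rfl)) ((hdd a b).1 hdist)
  · obtain ⟨S', hS'V, hcard, c', hc'⟩ := maxColorable_mem hk (r := r') (V.image φ)
    rw [← hcard]
    apply le_maxColorable
    refine ⟨V.filter (fun p => φ p ∈ S'), Finset.filter_subset _ _, ?_, c' ∘ φ, ?_⟩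
    · have himg : (V.filter (fun p => φ p ∈ S')).image φ = S' := by
        apply Finset.Subset.antisymm
        · intro q hq
          obtain ⟨p, hp, rfl⟩ := Finset.mem_image.1 hq
          exact (Finset.mem_filter.1 hp).2
        · intro q hq
          obtain ⟨p, hp, rfl⟩ := Finset.mem_image.1 (hS'V hq)
          exact Finset.mem_image.2 ⟨p, Finset.mem_filter.2 ⟨hp, hq⟩, rfl⟩
      conv_rhs => rw [← himg]
      rw [Finset.card_image_of_injective _ hφ]
    · intro u hu v hv huv hdist
      exact hc' (φ u) (Finset.mem_filter.1 hu).2 (φ v) (Finset.mem_filter.1 hv).2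
        (fun h => huv (hφ h)) ((hdd u v).2 hdist)

/-! #### Measurability -/

variable {n : ℕ}

def mcA (Q : Set (Euc d)) (I : Finset (Fin n)) (γ : Fin n → Fin k) (r : ℝ) (m : ℕ) :
    Set (Fin n → Euc d) :=
  {x | I.card = m ∧ (∀ i ∈ I, x i ∈ Q) ∧ ∀ i ∈ I, ∀ j ∈ I, i ≠ j →
    (x i ≠ x j ∧ (dist (x i) (x j) ≤ r → γ i ≠ γ j))}

lemma measurableSet_mcA {Q : Set (Euc d)} (hQ : MeasurableSet Q)
    (I : Finset (Fin n)) (γ : Fin n → Fin k) (m : ℕ) :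
    MeasurableSet (mcA Q I γ r m) := by
  have : mcA Q I γ r m = {x : Fin n → Euc d | I.card = m} ∩
      ((⋂ i, {x : Fin n → Euc d | i ∈ I → x i ∈ Q}) ∩
      ⋂ i, ⋂ j, {x : Fin n → Euc d | i ∈ I → j ∈ I → i ≠ j →
        (x i ≠ x j ∧ (dist (x i) (x j) ≤ r → γ i ≠ γ j))}) := by
    ext x
    simp only [mcA, Set.mem_inter_iff, Set.mem_iInter, Set.mem_setOf_eq]
    exact ⟨fun ⟨h1, hq, h2⟩ => ⟨h1, fun i hi => hq i hi,
        fun i j hi hj => h2 i hi j hj⟩,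
      fun ⟨h1, hq, h2⟩ => ⟨h1, fun i hi => hq i hi, fun i hi j hj => h2 i j hi hj⟩⟩
  rw [this]
  have hne : ∀ i j : Fin n, MeasurableSet {x : Fin n → Euc d | x i ≠ x j} := by
    intro i j
    have heq : {x : Fin n → Euc d | x i = x j} =
        (fun x : Fin n → Euc d => (x i, x j)) ⁻¹' (Set.diagonal (Euc d)) := by
      ext x; simp [Set.mem_diagonal_iff]
    have hm : Measurable fun x : Fin n → Euc d => (x i, x j) :=
      (measurable_pi_apply i).prodMk (measurable_pi_apply j)
    rw [show {x : Fin n → Euc d | x i ≠ x j} =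
      {x : Fin n → Euc d | x i = x j}ᶜ from rfl, heq]
    exact (hm (isClosed_diagonal.measurableSet)).compl
  have hdist : ∀ i j : Fin n,
      MeasurableSet {x : Fin n → Euc d | dist (x i) (x j) ≤ r} := by
    intro i j
    exact measurableSet_le ((measurable_pi_apply i).dist (measurable_pi_apply j))
      measurable_const
  apply MeasurableSet.inter
  · by_cases h : I.card = m
    · simp [h]
    · simp [h]
  apply MeasurableSet.inter
  · apply MeasurableSet.iInter; intro i
    by_cases hi : i ∈ I
    · have : {x : Fin n → Euc d | i ∈ I → x i ∈ Q} =
          (fun x : Fin n → Euc d => x i) ⁻¹' Q := by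
        ext x; simp [hi]
      rw [this]
      exact measurable_pi_apply i hQ
    · simp only [hi]; simp
  · apply MeasurableSet.iInter; intro i
    apply MeasurableSet.iInter; intro j
    by_cases hi : i ∈ I
    · by_cases hj : j ∈ I
      · by_cases hij : i = j
        · simp [hij]
        · have : {x : Fin n → Euc d | i ∈ I → j ∈ I → i ≠ j →
              (x i ≠ x j ∧ (dist (x i) (x j) ≤ r → γ i ≠ γ j))} =
              {x : Fin n → Euc d | x i ≠ x j} ∩
              {x : Fin n → Euc d | dist (x i) (x j) ≤ r → γ i ≠ γ j} := by
            ext x; simp only [Set.mem_setOf_eq, Set.mem_inter_iff]; tauto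
          rw [this]
          refine (hne i j).inter ?_
          by_cases hγ : γ i = γ j
          · have : {x : Fin n → Euc d | dist (x i) (x j) ≤ r → γ i ≠ γ j} =
                {x : Fin n → Euc d | dist (x i) (x j) ≤ r}ᶜ := by
              ext x; simp only [Set.mem_setOf_eq, Set.mem_compl_iff]; tauto
            rw [this]; exact (hdist i j).compl
          · have : {x : Fin n → Euc d | dist (x i) (x j) ≤ r → γ i ≠ γ j} =
                Set.univ := by
              ext x; simp only [Set.mem_setOf_eq, Set.mem_univ, iff_true]
              exact fun _ => hγ
            rw [this]; exact MeasurableSet.univ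
      · simp only [hj]; simp
    · simp only [hi]; simp

lemma mem_mcSet_iff_mcA (hk : 1 ≤ k) (Q : Set (Euc d)) [DecidablePred (· ∈ Q)]
    (m : ℕ) (x : Fin n → Euc d) :
    m ∈ mcSet d k r ((Finset.image x Finset.univ).filter (· ∈ Q)) ↔
      ∃ I : Finset (Fin n), ∃ γ : Fin n → Fin k, x ∈ mcA Q I γ r m := by
  classical
  constructor
  · rintro ⟨S, hS, hcard, c, hc⟩
    refine ⟨Finset.univ.filter (fun i => x i ∈ S ∧ ∀ j, j < i → x j ≠ x i),
      fun i => c (x i), ?_, ?_, ?_⟩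
    · -- card = m
      set I := Finset.univ.filter (fun i => x i ∈ S ∧ ∀ j, j < i → x j ≠ x i) with hI
      have hinj : Set.InjOn x ↑I := by
        intro i hi j hj hxij
        by_contra hij
        rcases Ne.lt_or_gt hij with h | h
        · exact (Finset.mem_filter.1 hj).2.2 i h hxij
        · exact (Finset.mem_filter.1 hi).2.2 j h hxij.symm
      have himg : Finset.image x I = S := by
        apply Finset.Subset.antisymm
        · intro p hp
          obtain ⟨i, hi, rfl⟩ := Finset.mem_image.1 hp
          exact (Finset.mem_filter.1 hi).2.1
        · intro p hp
          have hp' : p ∈ Finset.image x Finset.univ :=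
            Finset.mem_of_mem_filter _ (hS hp)
          obtain ⟨i₀, hi₀, hxi₀⟩ := Finset.mem_image.1 hp'
          set T := Finset.univ.filter (fun i : Fin n => x i = p) with hT
          have hTne : T.Nonempty := ⟨i₀, Finset.mem_filter.2 ⟨Finset.mem_univ _, hxi₀⟩⟩
          set i₁ := T.min' hTne with hi₁
          have hxi₁ : x i₁ = p := (Finset.mem_filter.1 (T.min'_mem hTne)).2
          refine Finset.mem_image.2 ⟨i₁, Finset.mem_filter.2
            ⟨Finset.mem_univ _, hxi₁ ▸ hp, ?_⟩, hxi₁⟩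
          intro j hj hxj
          have : i₁ ≤ j := T.min'_le j (Finset.mem_filter.2 ⟨Finset.mem_univ _,
            by rw [hxj, hxi₁]⟩)
          exact absurd hj (not_lt.2 this)
      rw [← himg, Finset.card_image_of_injOn hinj] at hcard
      exact hcard
    · -- membership in Q
      intro i hi
      have : x i ∈ S := (Finset.mem_filter.1 hi).2.1
      exact (Finset.mem_filter.1 (hS this)).2
    · -- pair condition
      intro i hi j hj hij
      have hxij : x i ≠ x j := by
        intro hxe
        rcases Ne.lt_or_gt hij with h | h
        · exact (Finset.mem_filter.1 hj).2.2 i h hxe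
        · exact (Finset.mem_filter.1 hi).2.2 j h hxe.symm
      exact ⟨hxij, fun hdr => hc _ (Finset.mem_filter.1 hi).2.1 _
        (Finset.mem_filter.1 hj).2.1 hxij hdr⟩
  · rintro ⟨I, γ, hIm, hQm, hpair⟩
    have hinj : Set.InjOn x ↑I := fun i hi j hj hxe => by
      by_contra hij
      exact (hpair i hi j hj hij).1 hxe
    refine ⟨Finset.image x I, ?_,
      by rw [Finset.card_image_of_injOn hinj]; exact hIm,
      fun p => if h : ∃ i ∈ I, x i = p then γ h.choose else ⟨0, hk⟩, ?_⟩
    · intro q hq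
      obtain ⟨i, hi, rfl⟩ := Finset.mem_image.1 hq
      exact Finset.mem_filter.2 ⟨Finset.mem_image.2 ⟨i, Finset.mem_univ _, rfl⟩,
        hQm i hi⟩
    · intro u hu v hv huv hdr
      obtain ⟨a, ha, rfl⟩ := Finset.mem_image.1 hu
      obtain ⟨b, hb, rfl⟩ := Finset.mem_image.1 hv
      have hu' : ∃ i ∈ I, x i = x a := ⟨a, ha, rfl⟩
      have hv' : ∃ i ∈ I, x i = x b := ⟨b, hb, rfl⟩
      have e1 : (fun p => if h : ∃ i ∈ I, x i = p then γ h.choose else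
          (⟨0, hk⟩ : Fin k)) (x a) = γ hu'.choose := dif_pos hu'
      have e2 : (fun p => if h : ∃ i ∈ I, x i = p then γ h.choose else
          (⟨0, hk⟩ : Fin k)) (x b) = γ hv'.choose := dif_pos hv'
      rw [e1, e2]
      have hau := hu'.choose_spec
      have hbv := hv'.choose_spec
      have hne : hu'.choose ≠ hv'.choose := by
        intro he
        exact huv (by rw [← hau.2, ← hbv.2, he])
      exact (hpair _ hau.1 _ hbv.1 hne).2 (by rw [hau.2, hbv.2]; exact hdr)

lemma measurable_mc_filter (hk : 1 ≤ k) {Q : Set (Euc d)} [DecidablePred (· ∈ Q)]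
    (hQ : MeasurableSet Q) :
    Measurable fun x : Fin n → Euc d =>
      maxColorable d k r ((Finset.image x Finset.univ).filter (· ∈ Q)) := by
  apply measurable_to_countable'
  intro m
  have key : ∀ m' : ℕ, MeasurableSet {x : Fin n → Euc d |
      m' ≤ maxColorable d k r ((Finset.image x Finset.univ).filter (· ∈ Q))} := by
    intro m'
    have heq : {x : Fin n → Euc d |
        m' ≤ maxColorable d k r ((Finset.image x Finset.univ).filter (· ∈ Q))}
        = ⋃ I : Finset (Fin n), ⋃ γ : Fin n → Fin k, mcA Q I γ r m' := by
      ext x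
      rw [Set.mem_setOf_eq, le_maxColorable_iff hk, mem_mcSet_iff_mcA hk Q]
      simp only [Set.mem_iUnion]
    rw [heq]
    exact MeasurableSet.iUnion fun I => MeasurableSet.iUnion fun γ =>
      measurableSet_mcA hQ I γ m'
  have heq2 : (fun x : Fin n → Euc d =>
      maxColorable d k r ((Finset.image x Finset.univ).filter (· ∈ Q))) ⁻¹' {m}
      = {x : Fin n → Euc d |
          m ≤ maxColorable d k r ((Finset.image x Finset.univ).filter (· ∈ Q))} ∩
        {x : Fin n → Euc d |
          m + 1 ≤ maxColorable d k r ((Finset.image x Finset.univ).filter (· ∈ Q))}ᶜ := by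
    ext x
    simp only [Set.mem_preimage, Set.mem_singleton_iff, Set.mem_inter_iff,
      Set.mem_setOf_eq, Set.mem_compl_iff]
    omega
  rw [heq2]
  exact (key m).inter (key (m + 1)).compl

lemma filter_univ_eq (V : Finset (Euc d)) :
    V.filter (· ∈ (Set.univ : Set (Euc d))) = V :=
  Finset.filter_true_of_mem (fun _ _ => Set.mem_univ _)

lemma measurable_mc (hk : 1 ≤ k) :
    Measurable fun x : Fin n → Euc d =>
      maxColorable d k r (Finset.image x Finset.univ) := by
  have := measurable_mc_filter (n := n) (r := r) hk
    (Q := (Set.univ : Set (Euc d))) MeasurableSet.univ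
  simpa only [filter_univ_eq] using this

/-! #### Thinning -/

section Thin
variable {Ω : Type*} [MeasurableSpace Ω] [DecidableEq Ω] (μ : Measure Ω)
  [IsProbabilityMeasure μ] (Q : Set Ω) (g : Finset Ω → ℝ)

lemma pi_restrict_box {ι : Type*} [Fintype ι] (ν : Measure Ω) [IsFiniteMeasure ν]
    (hQ : MeasurableSet Q) :
    Measure.pi (fun _ : ι => ν.restrict Q) =
      (Measure.pi fun _ : ι => ν).restrict (Set.pi Set.univ fun _ => Q) := by
  refine Measure.pi_eq fun s hs => ?_
  rw [Measure.restrict_apply (MeasurableSet.univ_pi hs)]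
  rw [← Set.pi_inter_distrib, Measure.pi_pi]
  simp_rw [Measure.restrict_apply (hs _)]

lemma pi_smul_const {ι : Type*} [Fintype ι] (ν : Measure Ω) [IsFiniteMeasure ν]
    (c : ℝ≥0∞) (hc : c ≠ ⊤) :
    Measure.pi (fun _ : ι => c • ν) = c ^ (Fintype.card ι) • Measure.pi (fun _ : ι => ν) := by
  haveI : IsFiniteMeasure (c • ν) := by
    constructor
    simp only [Measure.smul_apply, smul_eq_mul]
    exact ENNReal.mul_lt_top hc.lt_top (measure_lt_top ν _)
  refine Measure.pi_eq fun s hs => ?_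
  simp only [Measure.smul_apply, smul_eq_mul, Measure.pi_pi, Finset.prod_mul_distrib,
    Finset.prod_const, Finset.card_univ]

lemma pi_fintype_congr {ι : Type*} {Ω' : Type*} [MeasurableSpace Ω'] (F G : Fintype ι)
    (ν : Measure Ω') :
    @Measure.pi ι (fun _ => Ω') F (fun _ => ‹_›) (fun _ => ν) =
    @Measure.pi ι (fun _ => Ω') G (fun _ => ‹_›) (fun _ => ν) := by
  cases Subsingleton.elim F G; rfl

noncomputable def uQ : Measure Ω := (μ Q)⁻¹ • μ.restrict Q

lemma uQ_prob (hQ0 : μ Q ≠ 0) : IsProbabilityMeasure (uQ μ Q) := by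
  constructor
  rw [uQ, Measure.smul_apply, Measure.restrict_apply MeasurableSet.univ,
    Set.univ_inter, smul_eq_mul]
  exact ENNReal.inv_mul_cancel hQ0 (measure_ne_top μ Q)

lemma image_comp_equiv {α β γ : Type*} [Fintype α] [Fintype β] [DecidableEq γ]
    (e : α ≃ β) (y : β → γ) :
    Finset.image (fun a => y (e a)) Finset.univ = Finset.image y Finset.univ := by
  ext p
  simp only [Finset.mem_image, Finset.mem_univ, true_and]
  exact ⟨fun ⟨a, ha⟩ => ⟨e a, ha⟩, fun ⟨b, hb⟩ => ⟨e.symm b, by simpa using hb⟩⟩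

theorem thin [DecidablePred (· ∈ Q)] (hQ : MeasurableSet Q) (hQ0 : μ Q ≠ 0)
    (hg : ∀ m : ℕ, Measurable fun y : Fin m → Ω => g (Finset.image y Finset.univ))
    (hgb : ∀ V : Finset Ω, |g V| ≤ V.card) (n : ℕ) :
    ∫ x : Fin n → Ω, g ((Finset.image x Finset.univ).filter (· ∈ Q))
      ∂(Measure.pi fun _ => μ)
    = ∑ j ∈ Finset.range (n + 1), (n.choose j : ℝ) * (μ Q).toReal ^ j *
        (1 - (μ Q).toReal) ^ (n - j) *
        ∫ y : Fin j → Ω, g (Finset.image y Finset.univ)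
          ∂(Measure.pi fun _ => uQ μ Q) := by
  classical
  haveI hup : IsProbabilityMeasure (uQ μ Q) := uQ_prob μ Q hQ0
  set p : ℝ := (μ Q).toReal with hp
  set π : Measure (Fin n → Ω) := Measure.pi fun _ => μ with hπ
  set E : Finset (Fin n) → Set (Fin n → Ω) :=
    fun T => Set.pi Set.univ (fun i => if i ∈ T then Q else Qᶜ) with hE
  have hEmeas : ∀ T, MeasurableSet (E T) := by
    intro T
    refine MeasurableSet.univ_pi fun i => ?_
    by_cases hi : i ∈ T <;> simp [hi, hQ, hQ.compl]
  set gT : (T : Finset (Fin n)) → (Fin n → Ω) → ℝ :=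
    fun T x => g (Finset.image (fun i : {i // i ∈ T} => x ↑i) Finset.univ) with hgT
  have hh1 : ∀ T : Finset (Fin n), Measurable
      (fun w : {i // i ∈ T} → Ω => g (Finset.image w Finset.univ)) := by
    intro T
    have : (fun w : {i // i ∈ T} → Ω => g (Finset.image w Finset.univ)) =
        (fun y : Fin T.card → Ω => g (Finset.image y Finset.univ)) ∘
          (fun w j => w (T.equivFin.symm j)) := by
      funext w
      simp only [Function.comp_apply]
      rw [image_comp_equiv T.equivFin.symm w]
    rw [this]
    exact (hg T.card).comp (measurable_pi_lambda _ fun j => measurable_pi_apply _)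
  have hgTmeas : ∀ T, Measurable (gT T) := by
    intro T
    exact (hh1 T).comp (measurable_pi_lambda _ fun i => measurable_pi_apply _)
  have hpt : ∀ x : Fin n → Ω,
      g ((Finset.image x Finset.univ).filter (· ∈ Q)) =
      ∑ T : Finset (Fin n), (E T).indicator (gT T) x := by
    intro x
    set T₀ : Finset (Fin n) := Finset.univ.filter (fun i => x i ∈ Q) with hT₀
    rw [Finset.sum_eq_single T₀]
    · have hxT₀ : x ∈ E T₀ := by
        intro i _
        by_cases hi : x i ∈ Q
        · simp [hT₀, hi]
        · simp [hT₀, hi]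
      rw [Set.indicator_of_mem hxT₀]
      congr 1
      ext q
      simp only [Finset.mem_filter, Finset.mem_image, Finset.mem_univ, true_and, hgT]
      constructor
      · rintro ⟨⟨i, rfl⟩, hq⟩
        exact ⟨⟨i, Finset.mem_filter.2 ⟨Finset.mem_univ _, hq⟩⟩, rfl⟩
      · rintro ⟨⟨i, hi⟩, rfl⟩
        exact ⟨⟨i, rfl⟩, (Finset.mem_filter.1 hi).2⟩
    · intro T _ hT
      apply Set.indicator_of_notMem
      intro hxT
      apply hT
      ext i
      have := hxT i (Set.mem_univ i)
      by_cases hi : i ∈ T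
      · simp only [if_pos hi] at this
        simp [hT₀, hi, this]
      · simp only [if_neg hi] at this
        simp only [hT₀, Finset.mem_filter, Finset.mem_univ, true_and]
        exact iff_of_false hi this
    · intro h
      exact absurd (Finset.mem_univ T₀) h
  have hint : ∀ T : Finset (Fin n), Integrable ((E T).indicator (gT T)) π := by
    intro T
    refine Integrable.mono' (integrable_const (n : ℝ))
      ((hgTmeas T).indicator (hEmeas T)).aestronglyMeasurable
      (Filter.Eventually.of_forall fun x => ?_)
    rw [Real.norm_eq_abs]
    calc |(E T).indicator (gT T) x| ≤ |gT T x| := by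
          rcases Set.indicator_eq_zero_or_self (E T) (gT T) x with h | h <;> rw [h] <;> simp
      _ ≤ ((Finset.image (fun i : {i // i ∈ T} => x ↑i) Finset.univ).card : ℝ) := hgb _
      _ ≤ (n : ℝ) := by
          have h1 : (Finset.image (fun i : {i // i ∈ T} => x ↑i) Finset.univ).card ≤
              (Finset.univ : Finset {i // i ∈ T}).card := Finset.card_image_le
          have h2 : (Finset.univ : Finset {i // i ∈ T}).card = T.card := by
            rw [Finset.card_univ]; exact Fintype.card_coe T
          have h3 : T.card ≤ n := by
            simpa using Finset.card_le_card (Finset.subset_univ T)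
          have := h1.trans (le_trans (le_of_eq h2) h3)
          exact_mod_cast this
  have hsplit : ∫ x, g ((Finset.image x Finset.univ).filter (· ∈ Q)) ∂π
      = ∑ T : Finset (Fin n), ∫ x, (E T).indicator (gT T) x ∂π := by
    rw [← integral_finset_sum _ (fun T _ => hint T)]
    exact integral_congr_ae (Filter.Eventually.of_forall fun x => hpt x)
  set J : ℕ → ℝ := fun j => ∫ y : Fin j → Ω, g (Finset.image y Finset.univ)
      ∂(Measure.pi fun _ => uQ μ Q) with hJ
  have hstep : ∀ T : Finset (Fin n),
      ∫ x, (E T).indicator (gT T) x ∂π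
        = p ^ T.card * (1 - p) ^ (n - T.card) * J T.card := by
    intro T
    set B1 : Set ({i // i ∈ T} → Ω) := Set.pi Set.univ (fun _ => Q) with hB1
    set B2 : Set ({i // ¬ i ∈ T} → Ω) := Set.pi Set.univ (fun _ => Qᶜ) with hB2
    set e := MeasurableEquiv.piEquivPiSubtypeProd (fun _ : Fin n => Ω) (· ∈ T) with he
    have mp := measurePreserving_piEquivPiSubtypeProd (fun _ : Fin n => μ) (· ∈ T)
    set h1 : ({i // i ∈ T} → Ω) → ℝ := fun w => g (Finset.image w Finset.univ) with hh1d
    have hmem : ∀ x : Fin n → Ω, x ∈ E T ↔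
        ((fun i : {i // i ∈ T} => x ↑i) ∈ B1 ∧ (fun i : {i // ¬ i ∈ T} => x ↑i) ∈ B2) := by
      intro x
      simp only [hE, hB1, hB2, Set.mem_univ_pi]
      constructor
      · intro h
        exact ⟨fun i => by simpa [i.2] using h i, fun i => by simpa [i.2] using h i⟩
      · rintro ⟨hx1, hx2⟩ i
        by_cases hi : i ∈ T
        · simpa [hi] using hx1 ⟨i, hi⟩
        · simpa [hi] using hx2 ⟨i, hi⟩
    have hFH : ∀ x, (E T).indicator (gT T) x =
        (fun z : ({i // i ∈ T} → Ω) × ({i // ¬ i ∈ T} → Ω) =>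
          (B1.indicator h1 z.1) * (B2.indicator (fun _ => (1:ℝ)) z.2)) (e x) := by
      intro x
      show (E T).indicator (gT T) x =
        (B1.indicator h1 (e x).1) * (B2.indicator (fun _ => (1:ℝ)) (e x).2)
      have hfst : (e x).1 = fun i : {i // i ∈ T} => x ↑i := rfl
      have hsnd : (e x).2 = fun i : {i // ¬ i ∈ T} => x ↑i := rfl
      rw [hfst, hsnd]
      by_cases hx : x ∈ E T
      · obtain ⟨h1x, h2x⟩ := (hmem x).1 hx
        rw [Set.indicator_of_mem hx, Set.indicator_of_mem h1x,
          Set.indicator_of_mem h2x, mul_one]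
      · rw [Set.indicator_of_notMem hx]
        rcases not_and_or.1 (mt (hmem x).2 hx) with h | h
        · rw [Set.indicator_of_notMem h, zero_mul]
        · rw [Set.indicator_of_notMem h, mul_zero]
    have hcomp : ∫ x, (E T).indicator (gT T) x ∂π
        = ∫ z : ({i // i ∈ T} → Ω) × ({i // ¬ i ∈ T} → Ω),
            (B1.indicator h1 z.1) * (B2.indicator (fun _ => (1:ℝ)) z.2)
            ∂((Measure.pi fun _ : {i // i ∈ T} => μ).prod
              (Measure.pi fun _ : {i // ¬ i ∈ T} => μ)) := by
      have hI := mp.integral_comp e.measurableEmbedding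
        (fun z : ({i // i ∈ T} → Ω) × ({i // ¬ i ∈ T} → Ω) =>
          B1.indicator h1 z.1 * B2.indicator (fun _ => (1:ℝ)) z.2)
      rw [pi_fintype_congr (Subtype.fintype fun x => x ∈ T)
        (Finset.Subtype.fintype T) μ] at hI
      exact (integral_congr_ae (Filter.Eventually.of_forall hFH)).trans hI
    rw [hcomp, integral_prod_mul]
    have hf2 : ∫ w : {i // ¬ i ∈ T} → Ω, B2.indicator (fun _ => (1:ℝ)) w
        ∂(Measure.pi fun _ => μ) = (1 - p) ^ (n - T.card) := by
      have hmB2 : MeasurableSet B2 := by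
        rw [hB2]; exact MeasurableSet.univ_pi fun _ => hQ.compl
      have h1' := integral_indicator_one
        (μ := Measure.pi fun _ : {i // ¬ i ∈ T} => μ) hmB2
      rw [show (fun _ : {i // ¬ i ∈ T} → Ω => (1:ℝ))
          = (1 : ({i // ¬ i ∈ T} → Ω) → ℝ) from rfl, h1', hB2, measureReal_def, Measure.pi_pi]
      simp only [Finset.prod_const, Finset.card_univ]
      rw [prob_compl_eq_one_sub hQ, ENNReal.toReal_pow,
        ENNReal.toReal_sub_of_le prob_le_one ENNReal.one_ne_top, ENNReal.toReal_one]
      congr 1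
      rw [Fintype.card_subtype_compl, Fintype.card_fin, Fintype.card_coe]
    have hres : μ.restrict Q = (μ Q) • uQ μ Q := by
      rw [uQ, smul_smul, ENNReal.mul_inv_cancel hQ0 (measure_ne_top μ Q), one_smul]
    have hre : ∫ w : {i // i ∈ T} → Ω, h1 w ∂(Measure.pi fun _ => uQ μ Q)
        = J T.card := by
      set e0 : Fin T.card ≃ {i // i ∈ T} := T.equivFin.symm with he0
      have mpc := measurePreserving_piCongrLeft (fun _ : {i // i ∈ T} => uQ μ Q) e0
      rw [← mpc.integral_comp
        (MeasurableEquiv.piCongrLeft (fun _ => Ω) e0).measurableEmbedding h1, hJ]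
      apply integral_congr_ae
      apply Filter.Eventually.of_forall
      intro y
      simp only [hh1d]
      congr 1
      have key : ∀ i : {i // i ∈ T},
          (MeasurableEquiv.piCongrLeft (fun _ => Ω) e0) y i = y (e0.symm i) := by
        intro i
        have h2 := Equiv.piCongrLeft_apply_apply (fun _ : {i // i ∈ T} => Ω) e0 y
          (e0.symm i)
        simp only [Equiv.apply_symm_apply] at h2
        exact h2
      ext q
      simp only [Finset.mem_image, Finset.mem_univ, true_and]
      constructor
      · rintro ⟨i, rfl⟩
        exact ⟨e0.symm i, (key i).symm⟩
      · rintro ⟨j, rfl⟩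
        exact ⟨e0 j, by rw [key (e0 j)]; simp⟩
    have hf1 : ∫ w : {i // i ∈ T} → Ω, B1.indicator h1 w ∂(Measure.pi fun _ => μ)
        = p ^ T.card * J T.card := by
      have hmB1 : MeasurableSet B1 := by
        rw [hB1]; exact MeasurableSet.univ_pi fun _ => hQ
      have hrb : (Measure.pi fun _ : {i // i ∈ T} => μ).restrict B1
          = Measure.pi (fun _ : {i // i ∈ T} => μ.restrict Q) := by
        rw [hB1]; exact (pi_restrict_box Q μ hQ).symm
      rw [integral_indicator hmB1, hrb]
      rw [show Measure.pi (fun _ : {i // i ∈ T} => μ.restrict Q)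
          = Measure.pi (fun _ : {i // i ∈ T} => (μ Q) • uQ μ Q) by rw [← hres]]
      rw [pi_smul_const (uQ μ Q) _ (measure_ne_top μ Q), integral_smul_measure,
        ENNReal.toReal_pow, smul_eq_mul, Fintype.card_coe, hre]
    rw [hf1, hf2]
    ring
  rw [hsplit]
  rw [Finset.sum_congr rfl fun T _ => hstep T]
  rw [show (Finset.univ : Finset (Finset (Fin n)))
      = (Finset.univ : Finset (Fin n)).powerset from (Finset.powerset_univ).symm,
    Finset.sum_powerset]
  have hcard : (Finset.univ : Finset (Fin n)).card = n := by
    rw [Finset.card_univ, Fintype.card_fin]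
  rw [hcard]
  apply Finset.sum_congr rfl
  intro j hj
  have : ∀ T ∈ Finset.powersetCard j (Finset.univ : Finset (Fin n)),
      p ^ T.card * (1 - p) ^ (n - T.card) * J T.card
        = p ^ j * (1 - p) ^ (n - j) * J j := by
    intro T hT
    rw [(Finset.mem_powersetCard.1 hT).2]
  rw [Finset.sum_congr rfl this, Finset.sum_const, Finset.card_powersetCard, hcard,
    nsmul_eq_mul]
  ring

end Thin

/-! #### Geometry -/
section Geom

variable {d : ℕ}

/-- the closed subcube with corner `a` and side `u` -/
def subCube (a : Fin d → ℝ) (u : ℝ) : Set (Euc d) :=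
  {y | ∀ i, y i ∈ Set.Icc (a i) (a i + u)}

lemma measurable_eval (i : Fin d) : Measurable fun y : Euc d => y i := by
  have : (fun y : Euc d => y i) =
      (fun w : Fin d → ℝ => w i) ∘ ⇑((MeasurableEquiv.toLp 2 (Fin d → ℝ)).symm) := rfl
  rw [this]
  exact (measurable_pi_apply i).comp ((MeasurableEquiv.toLp 2 (Fin d → ℝ)).symm).measurable

lemma measurableSet_box (s : Fin d → Set ℝ) (hs : ∀ i, MeasurableSet (s i)) :
    MeasurableSet {y : Euc d | ∀ i, y i ∈ s i} := by
  have : {y : Euc d | ∀ i, y i ∈ s i} = ⋂ i, (fun y : Euc d => y i) ⁻¹' (s i) := by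
    ext y; simp
  rw [this]
  exact MeasurableSet.iInter fun i => measurable_eval i (hs i)

lemma volume_box (s : Fin d → Set ℝ) (hs : ∀ i, MeasurableSet (s i)) :
    volume {y : Euc d | ∀ i, y i ∈ s i} = ∏ i, volume (s i) := by
  have hpre : {y : Euc d | ∀ i, y i ∈ s i} =
      ⇑((MeasurableEquiv.toLp 2 (Fin d → ℝ)).symm) ⁻¹' (Set.pi Set.univ s) := by
    ext y
    simp only [Set.mem_setOf_eq, Set.mem_preimage, Set.mem_univ_pi,
      MeasurableEquiv.toLp_symm_apply]
  rw [hpre, (EuclideanSpace.volume_preserving_symm_measurableEquiv_toLp (Fin d)).measure_preimage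
    (MeasurableSet.univ_pi hs).nullMeasurableSet]
  exact volume_pi_pi s

lemma volume_subCube (a : Fin d → ℝ) {u : ℝ} (hu : 0 ≤ u) :
    volume (subCube a u) = ENNReal.ofReal (u ^ d) := by
  rw [show subCube a u = {y : Euc d | ∀ i, y i ∈ Set.Icc (a i) (a i + u)} from rfl,
    volume_box _ (fun i => measurableSet_Icc)]
  simp only [Real.volume_Icc, add_sub_cancel_left]
  rw [Finset.prod_const, Finset.card_univ, Fintype.card_fin,
    ENNReal.ofReal_pow hu]

lemma volume_unitCube : volume (unitCube d) = 1 := by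
  rw [show unitCube d = {y : Euc d | ∀ i, y i ∈ Set.Icc (0:ℝ) 1} from rfl,
    volume_box _ (fun i => measurableSet_Icc)]
  simp [Real.volume_Icc]

lemma measurableSet_unitCube : MeasurableSet (unitCube d) :=
  measurableSet_box (fun _ => Set.Icc 0 1) (fun _ => measurableSet_Icc)

lemma measurableSet_subCube (a : Fin d → ℝ) (u : ℝ) : MeasurableSet (subCube a u) :=
  measurableSet_box _ (fun _ => measurableSet_Icc)

instance uniformCube_prob : IsProbabilityMeasure (uniformCube d) := by
  constructor
  rw [uniformCube, Measure.restrict_apply_univ, volume_unitCube]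

/-- the rescaling map sending `subCube a u` to the unit cube -/
noncomputable def resc (a : Fin d → ℝ) (u : ℝ) : Euc d → Euc d :=
  fun y => u⁻¹ • (y - (EuclideanSpace.equiv (Fin d) ℝ).symm a)

lemma resc_apply (a : Fin d → ℝ) (u : ℝ) (y : Euc d) (i : Fin d) :
    resc a u y i = u⁻¹ * (y i - a i) := by
  simp [resc, PiLp.smul_apply, PiLp.sub_apply, smul_eq_mul]

lemma resc_dist (a : Fin d → ℝ) {u : ℝ} (hu : 0 < u) (y z : Euc d) :
    dist (resc a u y) (resc a u z) = u⁻¹ * dist y z := by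
  simp only [resc]
  rw [dist_eq_norm, dist_eq_norm]
  rw [show u⁻¹ • (y - (EuclideanSpace.equiv (Fin d) ℝ).symm a) -
      u⁻¹ • (z - (EuclideanSpace.equiv (Fin d) ℝ).symm a) = u⁻¹ • (y - z) by
    rw [← smul_sub]; congr 1; abel]
  rw [norm_smul, Real.norm_eq_abs, abs_of_pos (inv_pos.2 hu)]

lemma resc_injective (a : Fin d → ℝ) {u : ℝ} (hu : 0 < u) :
    Function.Injective (resc a u) := by
  intro y z h
  have h2 := resc_dist a hu y z
  rw [h, dist_self] at h2
  have h3 : dist y z = 0 := by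
    rcases mul_eq_zero.1 h2.symm with h4 | h4
    · exact absurd h4 (inv_ne_zero (ne_of_gt hu))
    · exact h4
  exact dist_eq_zero.1 h3

lemma resc_measurable (a : Fin d → ℝ) (u : ℝ) : Measurable (resc a u) := by
  apply Continuous.measurable
  exact ((continuous_id.sub continuous_const).const_smul u⁻¹)

lemma resc_preimage_unitCube (a : Fin d → ℝ) {u : ℝ} (hu : 0 < u) :
    resc a u ⁻¹' unitCube d = subCube a u := by
  ext y
  simp only [Set.mem_preimage, unitCube, subCube, Set.mem_setOf_eq, Set.mem_Icc]
  have key : ∀ w : ℝ, u * (u⁻¹ * w) = w := fun w => by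
    field_simp
  constructor
  · intro h i
    obtain ⟨h1, h2⟩ := h i
    rw [resc_apply] at h1 h2
    have ha := mul_le_mul_of_nonneg_left h1 hu.le
    have hb := mul_le_mul_of_nonneg_left h2 hu.le
    rw [mul_zero, key] at ha
    rw [key, mul_one] at hb
    constructor <;> linarith
  · intro h i
    obtain ⟨h1, h2⟩ := h i
    rw [resc_apply]
    have hiu : (0:ℝ) < u⁻¹ := inv_pos.2 hu
    constructor
    · exact mul_nonneg hiu.le (by linarith)
    · have := mul_le_mul_of_nonneg_left (show y i - a i ≤ u by linarith) hiu.le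
      rwa [inv_mul_cancel₀ (ne_of_gt hu)] at this

/-- pushforward of Lebesgue under the rescaling -/
lemma resc_map_volume (a : Fin d → ℝ) {u : ℝ} (hu : 0 < u) :
    Measure.map (resc a u) volume = ENNReal.ofReal (u ^ d) • volume := by
  have hcomp : resc a u = (fun y : Euc d => u⁻¹ • y) ∘
      (fun y : Euc d => y + (-(EuclideanSpace.equiv (Fin d) ℝ).symm a)) := by
    funext y; simp [resc, sub_eq_add_neg]
  rw [hcomp, ← Measure.map_map (by exact (measurable_id.const_smul (u⁻¹ : ℝ) : Measurable fun y : Euc d => u⁻¹ • y))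
    (measurable_add_const _)]
  rw [(measurePreserving_add_right volume _).map_eq]
  rw [Measure.map_addHaar_smul volume (inv_ne_zero (ne_of_gt hu))]
  congr 1
  rw [finrank_euclideanSpace_fin]
  rw [abs_of_pos]
  · rw [← inv_pow, inv_inv]
  · positivity
end Geom

/-! #### Poisson algebra -/


noncomputable def pois (x : ℝ) (n : ℕ) : ℝ := Real.exp (-x) * x ^ n / n.factorial

lemma pois_nonneg {x : ℝ} (hx : 0 ≤ x) (n : ℕ) : 0 ≤ pois x n := by
  unfold pois; positivity

lemma pois_eq_pmf {x : ℝ} (hx : 0 ≤ x) (n : ℕ) :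
    poissonPMFReal (Real.toNNReal x) n = pois x n := by
  unfold poissonPMFReal pois
  rw [Real.coe_toNNReal x hx]

lemma hasSum_pois {x : ℝ} (hx : 0 ≤ x) : HasSum (pois x) 1 := by
  have := poissonPMFRealSum (Real.toNNReal x)
  convert this using 1; funext n; exact (pois_eq_pmf hx n).symm

lemma summable_pois {x : ℝ} (hx : 0 ≤ x) : Summable (pois x) := (hasSum_pois hx).summable

lemma pois_succ_mul (x : ℝ) (n : ℕ) : pois x (n + 1) * (n + 1 : ℝ) = x * pois x n := by
  unfold pois
  rw [Nat.factorial_succ]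
  push_cast
  have h1 : ((n : ℝ) + 1) ≠ 0 := by positivity
  have h2 : (n.factorial : ℝ) ≠ 0 := by
    exact_mod_cast Nat.factorial_ne_zero n
  field_simp
  ring

lemma summable_pois_mul {x : ℝ} (hx : 0 ≤ x) :
    Summable (fun n => pois x n * n) := by
  rw [← summable_nat_add_iff 1]
  apply Summable.congr ((summable_pois hx).mul_left x)
  intro n
  rw [← pois_succ_mul x n]
  push_cast
  ring

lemma tsum_pois_mul {x : ℝ} (hx : 0 ≤ x) : ∑' n : ℕ, pois x n * n = x := by
  rw [Summable.tsum_eq_zero_add (summable_pois_mul hx)]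
  simp only [Nat.cast_zero, mul_zero, zero_add]
  rw [tsum_congr (fun n : ℕ => show pois x (n + 1) * ((n + 1 : ℕ) : ℝ) = x * pois x n by
    rw [← pois_succ_mul x n]; push_cast; ring)]
  rw [tsum_mul_left, (hasSum_pois hx).tsum_eq, mul_one]

/-- the Poisson–binomial mixture identity -/
theorem pois_binom {x p : ℝ} (hx : 0 ≤ x) (hp : 0 ≤ p) (hp1 : p ≤ 1) (h : ℕ → ℝ)
    (hh0 : ∀ j, 0 ≤ h j) (hhb : ∀ j, h j ≤ j) :
    ∑' n : ℕ, pois x n * (∑ j ∈ Finset.range (n + 1),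
      (n.choose j : ℝ) * p ^ j * (1 - p) ^ (n - j) * h j)
    = ∑' j : ℕ, pois (p * x) j * h j := by
  set f : ℕ → ℝ := fun j => pois (p * x) j * h j with hf
  set g : ℕ → ℝ := fun i => pois ((1 - p) * x) i with hg
  have hpx : 0 ≤ p * x := mul_nonneg hp hx
  have hqx : 0 ≤ (1 - p) * x := mul_nonneg (by linarith) hx
  have hfs : Summable fun j => ‖f j‖ := by
    apply Summable.of_nonneg_of_le (fun j => norm_nonneg _)
      (fun j => ?_) (summable_pois_mul hpx)
    rw [Real.norm_eq_abs, abs_mul, abs_of_nonneg (pois_nonneg hpx j),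
      abs_of_nonneg (hh0 j)]
    exact mul_le_mul_of_nonneg_left (hhb j) (pois_nonneg hpx j)
  have hgs : Summable fun i => ‖g i‖ := by
    apply Summable.of_nonneg_of_le (fun i => norm_nonneg _) (fun i => ?_)
      (summable_pois hqx)
    rw [Real.norm_eq_abs, abs_of_nonneg (pois_nonneg hqx i)]
  have key := tsum_mul_tsum_eq_tsum_sum_antidiagonal_of_summable_norm hfs hgs
  have hgsum : ∑' i, g i = 1 := (hasSum_pois hqx).tsum_eq
  have hterm : ∀ n : ℕ, ∀ j ∈ Finset.range (n + 1),
      f j * g (n - j) = pois x n * ((n.choose j : ℝ) * p ^ j * (1 - p) ^ (n - j) * h j) := by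
    intro n j hj
    have hjn : j ≤ n := Nat.lt_succ_iff.1 (Finset.mem_range.1 hj)
    unfold f g
    unfold pois
    beta_reduce
    rw [Nat.cast_choose ℝ hjn]
    have hxj : x ^ j * x ^ (n - j) = x ^ n := by
      rw [← pow_add]; congr 1; omega
    have hexp : Real.exp (-(p * x)) * Real.exp (-((1 - p) * x)) = Real.exp (-x) := by
      rw [← Real.exp_add]; ring_nf
    have h2 : (j.factorial : ℝ) ≠ 0 := by exact_mod_cast Nat.factorial_ne_zero j
    have h3 : ((n - j).factorial : ℝ) ≠ 0 := by exact_mod_cast Nat.factorial_ne_zero _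
    have h4 : (n.factorial : ℝ) ≠ 0 := by exact_mod_cast Nat.factorial_ne_zero n
    rw [mul_pow, mul_pow]
    field_simp
    rw [← hexp, ← hxj]
    ring
  calc ∑' n : ℕ, pois x n * (∑ j ∈ Finset.range (n + 1),
        (n.choose j : ℝ) * p ^ j * (1 - p) ^ (n - j) * h j)
      = ∑' n : ℕ, ∑ kl ∈ Finset.HasAntidiagonal.antidiagonal n, f kl.1 * g kl.2 := by
        apply tsum_congr
        intro n
        rw [Finset.Nat.sum_antidiagonal_eq_sum_range_succ_mk, Finset.mul_sum]
        exact (Finset.sum_congr rfl (hterm n)).symm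
    _ = (∑' j, f j) * (∑' i, g i) := key.symm
    _ = ∑' j, f j := by rw [hgsum, mul_one]
    _ = ∑' j : ℕ, pois (p * x) j * h j := rfl

/-- binomial sum bound -/
lemma binom_sum_le {p : ℝ} (hp : 0 ≤ p) (hp1 : p ≤ 1) (h : ℕ → ℝ)
    (hh0 : ∀ j, 0 ≤ h j) (hhb : ∀ j, h j ≤ j) (n : ℕ) :
    ∑ j ∈ Finset.range (n + 1), (n.choose j : ℝ) * p ^ j * (1 - p) ^ (n - j) * h j
      ≤ n := by
  have hq : 0 ≤ 1 - p := by linarith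
  calc ∑ j ∈ Finset.range (n + 1), (n.choose j : ℝ) * p ^ j * (1 - p) ^ (n - j) * h j
      ≤ ∑ j ∈ Finset.range (n + 1), (n.choose j : ℝ) * p ^ j * (1 - p) ^ (n - j) * n := by
        apply Finset.sum_le_sum
        intro j hj
        have hjn : j ≤ n := Nat.lt_succ_iff.1 (Finset.mem_range.1 hj)
        have : h j ≤ (n : ℝ) := le_trans (hhb j) (by exact_mod_cast hjn)
        apply mul_le_mul_of_nonneg_left this
        positivity
    _ = (∑ j ∈ Finset.range (n + 1), p ^ j * (1 - p) ^ (n - j) * (n.choose j : ℝ)) * n := by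
        rw [Finset.sum_mul]; apply Finset.sum_congr rfl; intro j _; ring
    _ = (p + (1 - p)) ^ n * n := by rw [add_pow]
    _ = n := by norm_num

lemma binom_sum_nonneg {p : ℝ} (hp : 0 ≤ p) (hp1 : p ≤ 1) (h : ℕ → ℝ)
    (hh0 : ∀ j, 0 ≤ h j) (n : ℕ) :
    0 ≤ ∑ j ∈ Finset.range (n + 1), (n.choose j : ℝ) * p ^ j * (1 - p) ^ (n - j) * h j := by
  apply Finset.sum_nonneg
  intro j _
  have hq : 0 ≤ 1 - p := by linarith
  have := hh0 j
  positivity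


/-! #### EH facts -/
section EHfacts
variable {d k : ℕ}

lemma integrable_mc_filter (hk : 1 ≤ k) {n : ℕ} {r : ℝ} {Q : Set (Euc d)}
    [DecidablePred (· ∈ Q)] (hQ : MeasurableSet Q) :
    Integrable (fun x : Fin n → Euc d =>
      (maxColorable d k r ((Finset.image x Finset.univ).filter (· ∈ Q)) : ℝ))
      (Measure.pi fun _ => uniformCube d) := by
  refine Integrable.mono' (integrable_const (n : ℝ))
    (Measurable.aestronglyMeasurable
      (measurable_from_nat.comp (measurable_mc_filter hk hQ)))
    (Filter.Eventually.of_forall fun x => ?_)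
  rw [Real.norm_eq_abs, abs_of_nonneg (by positivity)]
  have h1 := maxColorable_le_card (d := d) (k := k) (r := r)
    ((Finset.image x Finset.univ).filter (· ∈ Q))
  have h2 : ((Finset.image x Finset.univ).filter (· ∈ Q)).card ≤ n := by
    calc ((Finset.image x Finset.univ).filter (· ∈ Q)).card
        ≤ (Finset.image x Finset.univ).card :=
          Finset.card_le_card (Finset.filter_subset _ _)
      _ ≤ (Finset.univ : Finset (Fin n)).card := Finset.card_image_le
      _ = n := by rw [Finset.card_univ, Fintype.card_fin]
  exact_mod_cast h1.trans h2

lemma integrable_mc (hk : 1 ≤ k) {n : ℕ} {r : ℝ} :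
    Integrable (fun x : Fin n → Euc d =>
      (maxColorable d k r (Finset.image x Finset.univ) : ℝ))
      (Measure.pi fun _ => uniformCube d) := by
  have := integrable_mc_filter (n := n) (r := r) hk
    (Q := (Set.univ : Set (Euc d))) MeasurableSet.univ
  simpa only [filter_univ_eq] using this

lemma mc_cast_le_n {n : ℕ} {r : ℝ} (x : Fin n → Euc d) :
    (maxColorable d k r (Finset.image x Finset.univ) : ℝ) ≤ n := by
  have h1 := maxColorable_le_card (d := d) (k := k) (r := r)
    (Finset.image x Finset.univ)
  have h2 : (Finset.image x Finset.univ).card ≤ n := by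
    calc (Finset.image x Finset.univ).card
        ≤ (Finset.univ : Finset (Fin n)).card := Finset.card_image_le
      _ = n := by rw [Finset.card_univ, Fintype.card_fin]
  exact_mod_cast h1.trans h2

lemma EH_nonneg (r : ℝ) (n : ℕ) : 0 ≤ EH d k r n :=
  integral_nonneg fun x => by positivity

lemma EH_le_n (hk : 1 ≤ k) (r : ℝ) (n : ℕ) : EH d k r n ≤ n := by
  have := integral_mono (μ := Measure.pi fun _ : Fin n => uniformCube d)
    (integrable_mc (r := r) hk) (integrable_const (n : ℝ))
    (fun x => mc_cast_le_n (r := r) x)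
  simpa [EH] using this

end EHfacts

/-! #### The scaling identity for the inner integral -/
section Jeq
variable {d k : ℕ}

lemma uniformCube_apply_sub {Q : Set (Euc d)} (hQ : MeasurableSet Q)
    (hsub : Q ⊆ unitCube d) : uniformCube d Q = volume Q := by
  rw [uniformCube, Measure.restrict_apply hQ, Set.inter_eq_self_of_subset_left hsub]

lemma uniformCube_restrict_sub {Q : Set (Euc d)} (hQ : MeasurableSet Q)
    (hsub : Q ⊆ unitCube d) : (uniformCube d).restrict Q = volume.restrict Q := by
  rw [uniformCube, Measure.restrict_restrict hQ, Set.inter_eq_self_of_subset_left hsub]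

lemma map_resc_uQ (a : Fin d → ℝ) {u : ℝ} (hu : 0 < u)
    (hsub : subCube a u ⊆ unitCube d) :
    Measure.map (resc a u) (uQ (uniformCube d) (subCube a u)) = uniformCube d := by
  have hQ := measurableSet_subCube a u
  have hvol : volume (subCube a u) = ENNReal.ofReal (u ^ d) := volume_subCube a hu.le
  rw [uQ, uniformCube_apply_sub hQ hsub, uniformCube_restrict_sub hQ hsub,
    Measure.map_smul]
  have h1 : Measure.map (resc a u) (volume.restrict (subCube a u))
      = ENNReal.ofReal (u ^ d) • uniformCube d := by
    have h2 := Measure.restrict_map (μ := (volume : Measure (Euc d)))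
      (resc_measurable a u) (measurableSet_unitCube (d := d))
    rw [resc_preimage_unitCube a hu] at h2
    rw [← h2, resc_map_volume a hu, Measure.restrict_smul]
    rfl
  rw [h1, hvol, smul_smul, ENNReal.inv_mul_cancel, one_smul]
  · exact (ENNReal.ofReal_pos.2 (by positivity)).ne'
  · exact ENNReal.ofReal_ne_top

lemma subCube_vol_ne_zero (a : Fin d → ℝ) {u : ℝ} (hu : 0 < u)
    (hsub : subCube a u ⊆ unitCube d) :
    uniformCube d (subCube a u) ≠ 0 := by
  rw [uniformCube_apply_sub (measurableSet_subCube a u) hsub, volume_subCube a hu.le]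
  exact (ENNReal.ofReal_pos.2 (by positivity)).ne'

lemma map_pi_resc (a : Fin d → ℝ) {u : ℝ} (hu : 0 < u)
    (hsub : subCube a u ⊆ unitCube d) (j : ℕ) :
    Measure.map (fun y : Fin j → Euc d => resc a u ∘ y)
      (Measure.pi fun _ => uQ (uniformCube d) (subCube a u))
      = Measure.pi fun _ => uniformCube d := by
  haveI : IsProbabilityMeasure (uQ (uniformCube d) (subCube a u)) :=
    uQ_prob _ _ (subCube_vol_ne_zero a hu hsub)
  refine (Measure.pi_eq fun s hs => ?_).symm
  have hΦ : Measurable (fun y : Fin j → Euc d => resc a u ∘ y) :=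
    measurable_pi_lambda _ fun i => (resc_measurable a u).comp (measurable_pi_apply i)
  rw [Measure.map_apply hΦ (MeasurableSet.univ_pi hs)]
  have hpre : (fun y : Fin j → Euc d => resc a u ∘ y) ⁻¹' (Set.pi Set.univ s)
      = Set.pi Set.univ (fun i => resc a u ⁻¹' (s i)) := by
    ext y; simp [Function.comp]
  rw [hpre, Measure.pi_pi]
  apply Finset.prod_congr rfl
  intro i _
  rw [← Measure.map_apply (resc_measurable a u) (hs i), map_resc_uQ a hu hsub]

lemma J_eq (hk : 1 ≤ k) (a : Fin d → ℝ) {u r : ℝ} (hu : 0 < u)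
    (hsub : subCube a u ⊆ unitCube d) (j : ℕ) :
    ∫ y : Fin j → Euc d, (maxColorable d k r (Finset.image y Finset.univ) : ℝ)
      ∂(Measure.pi fun _ => uQ (uniformCube d) (subCube a u))
    = ∫ z : Fin j → Euc d,
        (maxColorable d k (u⁻¹ * r) (Finset.image z Finset.univ) : ℝ)
      ∂(Measure.pi fun _ => uniformCube d) := by
  haveI : IsProbabilityMeasure (uQ (uniformCube d) (subCube a u)) :=
    uQ_prob _ _ (subCube_vol_ne_zero a hu hsub)
  have hΦ : Measurable (fun y : Fin j → Euc d => resc a u ∘ y) :=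
    measurable_pi_lambda _ fun i => (resc_measurable a u).comp (measurable_pi_apply i)
  have hmeas : AEStronglyMeasurable (fun z : Fin j → Euc d =>
      (maxColorable d k (u⁻¹ * r) (Finset.image z Finset.univ) : ℝ))
      (Measure.map (fun y : Fin j → Euc d => resc a u ∘ y)
        (Measure.pi fun _ => uQ (uniformCube d) (subCube a u))) := by
    exact Measurable.aestronglyMeasurable
      (measurable_from_nat.comp (measurable_mc (r := u⁻¹ * r) hk))
  rw [← map_pi_resc a hu hsub j, integral_map hΦ.aemeasurable hmeas]
  apply integral_congr_ae
  apply Filter.Eventually.of_forall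
  intro y
  have himg : Finset.image (resc a u ∘ y) Finset.univ
      = (Finset.image y Finset.univ).image (resc a u) := by
    rw [Finset.image_image]
  have hdd : ∀ v w : Euc d, dist (resc a u v) (resc a u w) ≤ u⁻¹ * r ↔
      dist v w ≤ r := by
    intro v w
    rw [resc_dist a hu]
    exact mul_le_mul_iff_right₀ (inv_pos.2 hu)
  have := maxColorable_map (r := r) hk (resc a u) (resc_injective a hu) hdd
    (Finset.image y Finset.univ)
  show ((maxColorable d k r (Finset.image y Finset.univ) : ℕ) : ℝ)
    = ((maxColorable d k (u⁻¹ * r) (Finset.image (resc a u ∘ y) Finset.univ) : ℕ) : ℝ)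
  norm_cast
  rw [himg]
  exact this

end Jeq

/-! #### Cover geometry -/
section Cover
variable {d : ℕ}

lemma subQ_sub_unitCube {m : ℕ} {u : ℝ} (hu : 0 < u) (hmu : (m : ℝ) * u ≤ 1)
    (v : Fin d → Fin m) :
    subCube (fun i => (v i : ℝ) * u) u ⊆ unitCube d := by
  intro y hy i
  obtain ⟨h1, h2⟩ := hy i
  have h1' : ((v i : ℝ)) * u ≤ y i := h1
  have h2' : y i ≤ ((v i : ℝ)) * u + u := h2
  have hvm : ((v i : ℝ) + 1) ≤ (m : ℝ) := by
    have h3 : (v i : ℕ) + 1 ≤ m := (v i).2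
    exact_mod_cast h3
  constructor
  · have : (0:ℝ) ≤ (v i : ℝ) * u := by positivity
    linarith
  · have : ((v i : ℝ)) * u + u ≤ (m:ℝ) * u := by nlinarith
    linarith

lemma cover_lemma {m : ℕ} {u : ℝ} (hm : 1 ≤ m) (hu : 0 < u) (p : Euc d)
    (hp : ∀ i, p i ∈ Set.Icc (0:ℝ) ((m : ℝ) * u)) :
    ∃ v : Fin d → Fin m, p ∈ subCube (fun i => (v i : ℝ) * u) u := by
  have key : ∀ i : Fin d, ∃ w : ℕ, w < m ∧ (w:ℝ) * u ≤ p i ∧ p i ≤ (w:ℝ) * u + u := by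
    intro i
    obtain ⟨h0, h1⟩ := hp i
    have hdnn : 0 ≤ p i / u := div_nonneg h0 hu.le
    rcases le_or_gt (⌊p i / u⌋₊) (m - 1) with h | h
    · refine ⟨⌊p i / u⌋₊, by omega, ?_, ?_⟩
      · have := Nat.floor_le hdnn
        calc (⌊p i / u⌋₊ : ℝ) * u ≤ (p i / u) * u := by nlinarith
          _ = p i := by field_simp
      · have := Nat.lt_floor_add_one (p i / u)
        have h2 : p i < ((⌊p i / u⌋₊ : ℝ) + 1) * u := by
          calc p i = (p i / u) * u := by field_simp
            _ < ((⌊p i / u⌋₊ : ℝ) + 1) * u := by nlinarith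
        nlinarith
    · refine ⟨m - 1, by omega, ?_, ?_⟩ <;>
      · have hm2 : m ≤ ⌊p i / u⌋₊ := by omega
        have hmr : (m : ℝ) ≤ p i / u := by
          rw [← Nat.le_floor_iff hdnn] at *
          exact_mod_cast hm2
        have hmu2 : (m : ℝ) * u ≤ p i := by
          calc (m : ℝ) * u ≤ (p i / u) * u := by nlinarith
            _ = p i := by field_simp
        have hcast : ((m - 1 : ℕ) : ℝ) = (m : ℝ) - 1 := by
          have h5 : (1 : ℕ) ≤ m := hm
          push_cast [h5]
          ring
        rw [hcast]
        nlinarith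
  choose w hw1 hw2 hw3 using key
  exact ⟨fun i => ⟨w i, hw1 i⟩, fun i => ⟨hw2 i, hw3 i⟩⟩

end Cover

/-! #### The covering inequality for EH -/
section Master
variable {d k : ℕ}

lemma EH_cover (hk : 1 ≤ k) {s t : ℝ} (hs : 0 < s) (hst : s ≤ t) (n : ℕ) :
    EH d k (1/t) n ≤ ((⌊t/s⌋₊ : ℝ))^d * (∑ j ∈ Finset.range (n+1),
        (n.choose j : ℝ) * ((s/t)^d)^j * (1 - (s/t)^d)^(n-j) * EH d k (1/s) j)
      + n * (1 - ((⌊t/s⌋₊ : ℝ) * (s/t))^d) := by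
  haveI hd1 : ∀ Q' : Set (Euc d), DecidablePred (· ∈ Q') :=
    fun Q' => Classical.decPred _
  have ht : 0 < t := hs.trans_le hst
  set u : ℝ := s / t with hudef
  have hu : 0 < u := div_pos hs ht
  set m : ℕ := ⌊t/s⌋₊ with hmdef
  have hm1 : 1 ≤ m := Nat.le_floor (by
    rw [Nat.cast_one]
    exact (one_le_div hs).2 hst)
  have hmu : (m:ℝ) * u ≤ 1 := by
    have h1 : (m:ℝ) ≤ t/s := Nat.floor_le (by positivity)
    have h2 := mul_le_mul_of_nonneg_right h1 hu.le
    have h3 : (t/s) * u = 1 := by rw [hudef]; field_simp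
    linarith
  have hmu0 : (0:ℝ) ≤ (m:ℝ) * u := by positivity
  set Q : (Fin d → Fin m) → Set (Euc d) :=
    fun v => subCube (fun i => (v i : ℝ) * u) u with hQdef
  set R : Set (Euc d) := (subCube (fun _ => (0:ℝ)) ((m:ℝ) * u))ᶜ with hRdef
  have hQsub : ∀ v, Q v ⊆ unitCube d := fun v => subQ_sub_unitCube hu hmu v
  have hQmeas : ∀ v, MeasurableSet (Q v) := fun v => measurableSet_subCube _ _
  have hQvol : ∀ v, uniformCube d (Q v) = ENNReal.ofReal (u^d) := by
    intro v
    rw [hQdef]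
    rw [uniformCube_apply_sub (measurableSet_subCube _ _) (hQsub v),
      volume_subCube _ hu.le]
  have hQp : ∀ v, (uniformCube d (Q v)).toReal = u^d := by
    intro v
    rw [hQvol v, ENNReal.toReal_ofReal (by positivity)]
  have hQ0 : ∀ v, uniformCube d (Q v) ≠ 0 := by
    intro v
    rw [hQvol v]
    exact (ENNReal.ofReal_pos.2 (by positivity)).ne'
  have hRsub0 : subCube (fun _ => (0:ℝ)) ((m:ℝ)*u) ⊆ unitCube d := by
    intro y hy i
    obtain ⟨a1, a2⟩ := hy i
    have a1' : (0:ℝ) ≤ y i := by simpa using a1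
    have a2' : y i ≤ 0 + (m:ℝ)*u := a2
    exact ⟨a1', by linarith⟩
  have hRmeas : MeasurableSet R := (measurableSet_subCube _ _).compl
  have hμR : (uniformCube d R).toReal = 1 - ((m:ℝ)*u)^d := by
    have h1 : uniformCube d (subCube (fun _ => (0:ℝ)) ((m:ℝ)*u))
        = ENNReal.ofReal (((m:ℝ)*u)^d) := by
      rw [uniformCube_apply_sub (measurableSet_subCube _ _) hRsub0,
        volume_subCube _ hmu0]
    have h2 : uniformCube d R = 1 - ENNReal.ofReal (((m:ℝ)*u)^d) := by
      rw [hRdef, prob_compl_eq_one_sub (measurableSet_subCube _ _), h1]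
    rw [h2, ENNReal.toReal_sub_of_le
        (ENNReal.ofReal_le_one.2 (pow_le_one₀ hmu0 hmu)) ENNReal.one_ne_top,
      ENNReal.toReal_one, ENNReal.toReal_ofReal (by positivity)]
  -- pointwise bound
  have hpoint : ∀ x : Fin n → Euc d,
      (maxColorable d k (1/t) (Finset.image x Finset.univ) : ℝ)
        ≤ (∑ v : Fin d → Fin m, (maxColorable d k (1/t)
            ((Finset.image x Finset.univ).filter (· ∈ Q v)) : ℝ))
          + ∑ i : Fin n, R.indicator (fun _ => (1:ℝ)) (x i) := by
    intro x
    have hcov : ∀ p ∈ Finset.image x Finset.univ,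
        ∃ o ∈ (Finset.univ : Finset (Option (Fin d → Fin m))),
          p ∈ (fun o : Option (Fin d → Fin m) => Option.elim o R Q) o := by
      intro p _
      by_cases hp : ∀ i, p i ∈ Set.Icc (0:ℝ) ((m:ℝ) * u)
      · obtain ⟨v, hv⟩ := cover_lemma hm1 hu p hp
        exact ⟨some v, Finset.mem_univ _, hv⟩
      · refine ⟨none, Finset.mem_univ _, fun hcon => ?_⟩
        apply hp
        intro i
        obtain ⟨c1, c2⟩ := hcon i
        have c1' : (0:ℝ) ≤ p i := by simpa using c1
        have c2' : p i ≤ 0 + (m:ℝ)*u := c2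
        exact ⟨c1', by linarith⟩
    have h1 := maxColorable_le_sum_cover (r := 1/t) hk Finset.univ
      (fun o : Option (Fin d → Fin m) => Option.elim o R Q)
      (Finset.image x Finset.univ) hcov
    rw [Fintype.sum_option] at h1
    have h2 : ((maxColorable d k (1/t)
        ((Finset.image x Finset.univ).filter (· ∈ R))) : ℝ)
        ≤ ∑ i : Fin n, R.indicator (fun _ => (1:ℝ)) (x i) := by
      have hsubset : (Finset.image x Finset.univ).filter (· ∈ R)
          ⊆ Finset.image x (Finset.univ.filter (fun i => x i ∈ R)) := by
        intro q hq
        obtain ⟨hq1, hq2⟩ := Finset.mem_filter.1 hq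
        obtain ⟨i, _, rfl⟩ := Finset.mem_image.1 hq1
        exact Finset.mem_image.2 ⟨i, Finset.mem_filter.2 ⟨Finset.mem_univ _, hq2⟩, rfl⟩
      have hcard : ((Finset.image x Finset.univ).filter (· ∈ R)).card
          ≤ (Finset.univ.filter (fun i => x i ∈ R)).card :=
        le_trans (Finset.card_le_card hsubset) Finset.card_image_le
      have hN := maxColorable_le_card (d := d) (k := k) (r := 1/t)
        ((Finset.image x Finset.univ).filter (· ∈ R))
      have hsum : ((Finset.univ.filter (fun i => x i ∈ R)).card : ℝ)
          = ∑ i : Fin n, R.indicator (fun _ => (1:ℝ)) (x i) := by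
        rw [Finset.card_filter]
        push_cast
        apply Finset.sum_congr rfl
        intro i _
        by_cases hxi : x i ∈ R <;> simp [Set.indicator_apply, hxi]
      rw [← hsum]
      exact_mod_cast hN.trans hcard
    have h1' : ((maxColorable d k (1/t) (Finset.image x Finset.univ)) : ℝ)
        ≤ ((maxColorable d k (1/t) ((Finset.image x Finset.univ).filter (· ∈ R))) : ℝ)
          + ∑ v : Fin d → Fin m, ((maxColorable d k (1/t)
              ((Finset.image x Finset.univ).filter (· ∈ Q v))) : ℝ) := by
      exact_mod_cast h1
    linarith
  -- integrability
  have hintQ : ∀ v : Fin d → Fin m, Integrable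
      (fun x : Fin n → Euc d => (maxColorable d k (1/t)
        ((Finset.image x Finset.univ).filter (· ∈ Q v)) : ℝ))
      (Measure.pi fun _ => uniformCube d) :=
    fun v => integrable_mc_filter hk (hQmeas v)
  have hindic : ∀ i : Fin n, Integrable
      (fun x : Fin n → Euc d => R.indicator (fun _ => (1:ℝ)) (x i))
      (Measure.pi fun _ : Fin n => uniformCube d) := by
    intro i
    have heq : (fun x : Fin n → Euc d => R.indicator (fun _ => (1:ℝ)) (x i))
        = ((fun x : Fin n → Euc d => x i) ⁻¹' R).indicator (fun _ => (1:ℝ)) := by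
      ext x
      by_cases hxi : x i ∈ R <;> simp [Set.indicator_apply, hxi]
    rw [heq]
    exact (integrable_const 1).indicator (measurable_pi_apply i hRmeas)
  have hintRHS : Integrable (fun x : Fin n → Euc d =>
      (∑ v : Fin d → Fin m, (maxColorable d k (1/t)
          ((Finset.image x Finset.univ).filter (· ∈ Q v)) : ℝ))
        + ∑ i : Fin n, R.indicator (fun _ => (1:ℝ)) (x i))
      (Measure.pi fun _ => uniformCube d) :=
    (integrable_finset_sum _ fun v _ => hintQ v).add
      (integrable_finset_sum _ fun i _ => hindic i)
  have step1 : EH d k (1/t) n ≤ ∫ x : Fin n → Euc d,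
      ((∑ v : Fin d → Fin m, (maxColorable d k (1/t)
          ((Finset.image x Finset.univ).filter (· ∈ Q v)) : ℝ))
        + ∑ i : Fin n, R.indicator (fun _ => (1:ℝ)) (x i))
      ∂(Measure.pi fun _ => uniformCube d) :=
    integral_mono (integrable_mc (r := 1/t) hk) hintRHS hpoint
  -- compute the right-hand side
  have hsplit : ∫ x : Fin n → Euc d,
      ((∑ v : Fin d → Fin m, (maxColorable d k (1/t)
          ((Finset.image x Finset.univ).filter (· ∈ Q v)) : ℝ))
        + ∑ i : Fin n, R.indicator (fun _ => (1:ℝ)) (x i))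
      ∂(Measure.pi fun _ => uniformCube d)
      = (∑ v : Fin d → Fin m, ∫ x : Fin n → Euc d, (maxColorable d k (1/t)
          ((Finset.image x Finset.univ).filter (· ∈ Q v)) : ℝ)
          ∂(Measure.pi fun _ => uniformCube d))
        + ∑ i : Fin n, ∫ x : Fin n → Euc d, R.indicator (fun _ => (1:ℝ)) (x i)
          ∂(Measure.pi fun _ => uniformCube d) := by
    rw [integral_add (integrable_finset_sum _ fun v _ => hintQ v)
      (integrable_finset_sum _ fun i _ => hindic i),
      integral_finset_sum _ (fun v _ => hintQ v),
      integral_finset_sum _ (fun i _ => hindic i)]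
  -- each subcube term
  have hv : ∀ v : Fin d → Fin m,
      ∫ x : Fin n → Euc d, (maxColorable d k (1/t)
          ((Finset.image x Finset.univ).filter (· ∈ Q v)) : ℝ)
          ∂(Measure.pi fun _ => uniformCube d)
      = ∑ j ∈ Finset.range (n+1), (n.choose j : ℝ) * (u^d)^j * (1 - u^d)^(n-j)
          * EH d k (1/s) j := by
    intro v
    have hthin := thin (uniformCube d) (Q v)
      (fun V => (maxColorable d k (1/t) V : ℝ)) (hQmeas v) (hQ0 v)
      (fun mm => measurable_from_nat.comp (measurable_mc (r := 1/t) hk))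
      (fun V => by
        show |(maxColorable d k (1/t) V : ℝ)| ≤ (V.card : ℝ)
        rw [abs_of_nonneg (by positivity)]
        exact_mod_cast maxColorable_le_card (d := d) (k := k) (r := 1/t) V) n
    rw [hthin]
    apply Finset.sum_congr rfl
    intro j _
    rw [hQp v]
    congr 1
    have hJ := J_eq (r := 1/t) hk (fun i => (v i : ℝ) * u) hu (hQsub v) j
    rw [hJ]
    have hrs : u⁻¹ * (1/t) = 1/s := by
      rw [hudef]
      field_simp
    rw [hrs]
    rfl
  -- each indicator term
  have hi : ∀ i : Fin n,
      ∫ x : Fin n → Euc d, R.indicator (fun _ => (1:ℝ)) (x i)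
        ∂(Measure.pi fun _ => uniformCube d)
      = 1 - ((m:ℝ)*u)^d := by
    intro i
    have heq : (fun x : Fin n → Euc d => R.indicator (fun _ => (1:ℝ)) (x i))
        = ((fun x : Fin n → Euc d => x i) ⁻¹' R).indicator (fun _ => (1:ℝ)) := by
      ext x
      by_cases hxi : x i ∈ R <;> simp [Set.indicator_apply, hxi]
    rw [heq]
    rw [show ((fun x : Fin n → Euc d => x i) ⁻¹' R).indicator (fun _ => (1:ℝ))
        = ((fun x : Fin n → Euc d => x i) ⁻¹' R).indicator
          (1 : (Fin n → Euc d) → ℝ) from rfl]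
    rw [integral_indicator_one (measurable_pi_apply i hRmeas)]
    have hpre : (fun x : Fin n → Euc d => x i) ⁻¹' R
        = Set.pi Set.univ (fun j => if j = i then R else Set.univ) := by
      ext x
      simp only [Set.mem_preimage, Set.mem_univ_pi]
      constructor
      · intro h j
        by_cases hj : j = i
        · subst hj; simpa using h
        · simp [hj]
      · intro h
        have := h i
        simpa using this
    rw [measureReal_def, hpre, Measure.pi_pi]
    have hprod : ∏ j : Fin n, uniformCube d (if j = i then R else Set.univ)
        = uniformCube d R := by
      rw [Finset.prod_eq_single i]
      · simp
      · intro b _ hb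
        simp [hb]
      · intro h
        exact absurd (Finset.mem_univ i) h
    rw [hprod, hμR]
  -- assemble
  have hconst : ∑ v : Fin d → Fin m, (∑ j ∈ Finset.range (n+1),
        (n.choose j : ℝ) * (u^d)^j * (1 - u^d)^(n-j) * EH d k (1/s) j)
      = ((m:ℝ))^d * ∑ j ∈ Finset.range (n+1),
        (n.choose j : ℝ) * (u^d)^j * (1 - u^d)^(n-j) * EH d k (1/s) j := by
    rw [Finset.sum_const, Finset.card_univ, Fintype.card_fun, Fintype.card_fin,
      Fintype.card_fin, nsmul_eq_mul]
    push_cast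
    ring
  calc EH d k (1/t) n ≤ _ := step1
    _ = (∑ v : Fin d → Fin m, ∑ j ∈ Finset.range (n+1),
          (n.choose j : ℝ) * (u^d)^j * (1 - u^d)^(n-j) * EH d k (1/s) j)
        + ∑ _i : Fin n, (1 - ((m:ℝ)*u)^d) := by
        rw [hsplit, Finset.sum_congr rfl (fun v _ => hv v),
          Finset.sum_congr rfl (fun i _ => hi i)]
    _ = ((m:ℝ))^d * (∑ j ∈ Finset.range (n+1),
          (n.choose j : ℝ) * (u^d)^j * (1 - u^d)^(n-j) * EH d k (1/s) j)
        + n * (1 - ((m:ℝ)*u)^d) := by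
        rw [hconst, Finset.sum_const, Finset.card_univ, Fintype.card_fin,
          nsmul_eq_mul]

lemma EF_nonneg (lam t : ℝ) : 0 ≤ EF d k lam t :=
  tsum_nonneg fun n => mul_nonneg poissonPMFReal_nonneg (EH_nonneg _ _)

lemma EF_pois {lam t : ℝ} (h : 0 ≤ lam * t ^ d) :
    EF d k lam t = ∑' n : ℕ, pois (lam * t ^ d) n * EH d k (1/t) n := by
  apply tsum_congr
  intro n
  rw [pois_eq_pmf h]

lemma summable_pois_EH (hk : 1 ≤ k) {x : ℝ} (hx : 0 ≤ x) (r : ℝ) :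
    Summable (fun n => pois x n * EH d k r n) := by
  apply Summable.of_nonneg_of_le
    (fun n => mul_nonneg (pois_nonneg hx n) (EH_nonneg _ _))
    (fun n => mul_le_mul_of_nonneg_left (EH_le_n hk r n) (pois_nonneg hx n))
    (summable_pois_mul hx)

lemma EF_master (hk : 1 ≤ k) {lam s t : ℝ} (hlam : 0 < lam) (hs : 0 < s)
    (hst : s ≤ t) :
    EF d k lam t ≤ ((⌊t/s⌋₊ : ℝ))^d * EF d k lam s
      + (1 - ((⌊t/s⌋₊ : ℝ) * (s/t))^d) * (lam * t^d) := by
  have ht : 0 < t := hs.trans_le hst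
  set x : ℝ := lam * t ^ d with hxdef
  have hx : 0 ≤ x := by positivity
  set p : ℝ := (s/t)^d with hpdef
  have hp0 : 0 ≤ p := by positivity
  have hp1 : p ≤ 1 := by
    rw [hpdef]
    exact pow_le_one₀ (by positivity) ((div_le_one ht).2 hst)
  set m : ℕ := ⌊t/s⌋₊ with hmdef
  set ρ : ℝ := 1 - ((m:ℝ) * (s/t))^d with hρdef
  have hmu : (m:ℝ) * (s/t) ≤ 1 := by
    have h1 : (m:ℝ) ≤ t/s := Nat.floor_le (by positivity)
    have h2 := mul_le_mul_of_nonneg_right h1 (by positivity : (0:ℝ) ≤ s/t)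
    have h3 : (t/s) * (s/t) = 1 := by field_simp
    linarith
  have hρ0 : 0 ≤ ρ := by
    rw [hρdef]
    have h7 : ((m:ℝ) * (s/t))^d ≤ 1 :=
      pow_le_one₀ (by positivity : (0:ℝ) ≤ (m:ℝ)*(s/t)) hmu
    linarith
  set binom : ℕ → ℝ := fun n => ∑ j ∈ Finset.range (n+1),
    (n.choose j : ℝ) * p^j * (1 - p)^(n-j) * EH d k (1/s) j with hbinomdef
  have hbnn : ∀ n, 0 ≤ binom n :=
    fun n => binom_sum_nonneg hp0 hp1 _ (fun j => EH_nonneg _ _) n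
  have hble : ∀ n, binom n ≤ n :=
    fun n => binom_sum_le hp0 hp1 _ (fun j => EH_nonneg _ _)
      (fun j => EH_le_n hk _ j) n
  have hterm : ∀ n : ℕ, pois x n * EH d k (1/t) n
      ≤ pois x n * (((m:ℝ))^d * binom n + n * ρ) :=
    fun n => mul_le_mul_of_nonneg_left (EH_cover hk hs hst n) (pois_nonneg hx n)
  have S1 : Summable (fun n => pois x n * EH d k (1/t) n) :=
    summable_pois_EH hk hx _
  have Sb : Summable (fun n => pois x n * binom n) := by
    apply Summable.of_nonneg_of_le
      (fun n => mul_nonneg (pois_nonneg hx n) (hbnn n))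
      (fun n => mul_le_mul_of_nonneg_left (hble n) (pois_nonneg hx n))
      (summable_pois_mul hx)
  have Sn : Summable (fun n => pois x n * n) := summable_pois_mul hx
  have SR : Summable (fun n => pois x n * (((m:ℝ))^d * binom n + n * ρ)) := by
    apply Summable.congr (((Sb.mul_left (((m:ℝ))^d)).add (Sn.mul_left ρ)))
    intro n
    ring
  have step : EF d k lam t ≤ ∑' n : ℕ, pois x n * (((m:ℝ))^d * binom n + n * ρ) := by
    rw [EF_pois hx]
    exact Summable.tsum_le_tsum hterm S1 SR
  have hsplit : ∑' n : ℕ, pois x n * (((m:ℝ))^d * binom n + n * ρ)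
      = ((m:ℝ))^d * (∑' n : ℕ, pois x n * binom n)
        + ρ * (∑' n : ℕ, pois x n * n) := by
    rw [tsum_congr (fun n : ℕ => show pois x n * (((m:ℝ))^d * binom n + n * ρ)
        = ((m:ℝ))^d * (pois x n * binom n) + ρ * (pois x n * n) by ring)]
    rw [Summable.tsum_add (Sb.mul_left _) (Sn.mul_left _), tsum_mul_left, tsum_mul_left]
  have hbin : ∑' n : ℕ, pois x n * binom n = EF d k lam s := by
    rw [hbinomdef]
    rw [pois_binom hx hp0 hp1 (EH d k (1/s)) (fun j => EH_nonneg _ _)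
      (fun j => EH_le_n hk _ j)]
    have hps : p * x = lam * s ^ d := by
      rw [hpdef, hxdef, div_pow]
      field_simp
    rw [hps, ← EF_pois (by positivity)]
  rw [hsplit, hbin, tsum_pois_mul hx] at step
  exact step

end Master

/-! #### Normalized bounds -/
section Final
variable {d k : ℕ}

lemma Fbar_nonneg {lam t : ℝ} (hlam : 0 < lam) (ht : 0 < t) :
    0 ≤ Fbar d k lam t :=
  div_nonneg (EF_nonneg lam t) (by positivity)

lemma Fbar_le_of (hk : 1 ≤ k) {lam s t : ℝ} (hlam : 0 < lam) (hs : 0 < s)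
    (hst : s ≤ t) :
    Fbar d k lam t ≤ Fbar d k lam s + (1 - (1 - s/t)^d) := by
  have ht : 0 < t := hs.trans_le hst
  have hmain := EF_master (d := d) hk hlam hs hst
  set m : ℕ := ⌊t/s⌋₊ with hmdef
  set α : ℝ := (m:ℝ) * (s/t) with hαdef
  have hα1 : α ≤ 1 := by
    have h1 : (m:ℝ) ≤ t/s := Nat.floor_le (by positivity)
    have h2 := mul_le_mul_of_nonneg_right h1 (by positivity : (0:ℝ) ≤ s/t)
    have h3 : (t/s) * (s/t) = 1 := by field_simp
    rw [hαdef]; linarith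
  have hα0 : 0 ≤ α := by rw [hαdef]; positivity
  have hα2 : 1 - s/t ≤ α := by
    have h0 := Nat.sub_one_lt_floor (t/s)
    have h4 := mul_le_mul_of_nonneg_right h0.le (by positivity : (0:ℝ) ≤ s/t)
    have h5 : (t/s - 1) * (s/t) = 1 - s/t := by field_simp
    rw [hαdef, hmdef]
    linarith
  have h0α : (0:ℝ) ≤ 1 - s/t := by
    have : s/t ≤ 1 := (div_le_one ht).2 hst
    linarith
  have hpow : (1 - s/t)^d ≤ α^d := pow_le_pow_left₀ h0α hα2 d
  have hαd1 : α^d ≤ 1 := pow_le_one₀ hα0 hα1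
  have hden : (0:ℝ) < lam * t^d := by positivity
  have hF : Fbar d k lam t
      ≤ (((m:ℝ))^d * EF d k lam s + (1 - α^d) * (lam * t^d)) / (lam * t^d) := by
    rw [Fbar]
    exact (div_le_div_iff_of_pos_right hden).2 hmain
  have hgrp : (((m:ℝ))^d * EF d k lam s + (1 - α^d) * (lam * t^d)) / (lam * t^d)
      = α^d * Fbar d k lam s + (1 - α^d) := by
    rw [Fbar, hαdef, div_eq_iff hden.ne']
    field_simp
    have htt : t ^ d * t⁻¹ ^ d = 1 := by rw [← mul_pow, mul_inv_cancel₀ ht.ne', one_pow]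
    linear_combination (-(((m:ℝ)) ^ d * EF d k lam s * s ^ d)) * htt
  have hFs0 : 0 ≤ Fbar d k lam s := Fbar_nonneg hlam hs
  have h6 : α^d * Fbar d k lam s ≤ Fbar d k lam s :=
    mul_le_of_le_one_left hFs0 hαd1
  have := hF.trans_eq hgrp
  linarith

end Final

end PoissonFekete

/-- the limit `lim_{t→∞} \bar F_{k,λ}(t)` exists and equals
`a_{k,λ} = inf_{t>0} \bar F_{k,λ}(t)`. -/
theorem tendsto_Fbar (d k : ℕ) (hd : 1 ≤ d) (hk : 1 ≤ k) (lam : ℝ) (hlam : 0 < lam) :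
    Tendsto (fun t : ℝ => Fbar d k lam t) atTop (nhds (aConst d k lam)) := by
  have hne : {x : ℝ | ∃ t : ℝ, 0 < t ∧ x = Fbar d k lam t}.Nonempty :=
    ⟨Fbar d k lam 1, 1, one_pos, rfl⟩
  have hbdd : BddBelow {x : ℝ | ∃ t : ℝ, 0 < t ∧ x = Fbar d k lam t} := by
    refine ⟨0, fun y hy => ?_⟩
    obtain ⟨t, ht, rfl⟩ := hy
    exact PoissonFekete.Fbar_nonneg hlam ht
  have ha_le : ∀ t : ℝ, 0 < t → aConst d k lam ≤ Fbar d k lam t :=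
    fun t ht => csInf_le hbdd ⟨t, ht, rfl⟩
  rw [Metric.tendsto_atTop]
  intro ε hε
  have hlt : aConst d k lam < aConst d k lam + ε/2 := by linarith
  obtain ⟨y, hy, hylt⟩ := exists_lt_of_csInf_lt hne hlt
  obtain ⟨s, hs, rfl⟩ := hy
  have htend : Tendsto (fun t : ℝ => 1 - (1 - s/t)^d) atTop (nhds 0) := by
    have h1 : Tendsto (fun t : ℝ => s/t) atTop (nhds 0) :=
      Tendsto.div_atTop tendsto_const_nhds tendsto_id
    have h2 : Tendsto (fun t : ℝ => 1 - (1 - s/t)^d) atTop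
        (nhds (1 - (1 - 0)^d)) :=
      Tendsto.const_sub _ ((Tendsto.const_sub _ h1).pow d)
    simpa using h2
  have hev1 : ∀ᶠ t : ℝ in atTop, 1 - (1 - s/t)^d < ε/2 :=
    htend.eventually_lt_const (by linarith)
  have hev2 : ∀ᶠ t : ℝ in atTop, s ≤ t := eventually_ge_atTop s
  obtain ⟨N, hN⟩ := Filter.eventually_atTop.1 (hev1.and hev2)
  refine ⟨N, fun t hts => ?_⟩
  obtain ⟨hlt2, hst⟩ := hN t hts
  have ht : 0 < t := hs.trans_le hst
  have hb1 := ha_le t ht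
  have hb2 := PoissonFekete.Fbar_le_of (d := d) hk hlam hs hst
  rw [Real.dist_eq, abs_of_nonneg (by linarith)]
  linarith
end

section
/- For every dimension d ≥ 1, every k ≥ 1, every λ > 0, and every ε > 0, one has a_{k,λ(1+ε)} ≤ a_{k,λ} + ε. -/
open MeasureTheory ProbabilityTheory Filter

/-! ### Auxiliary lemmas -/

lemma bddAbove_maxColorable_set (d k : ℕ) (r : ℝ)
    (V : Finset (EuclideanSpace ℝ (Fin d))) :
    BddAbove {m : ℕ | ∃ S : Finset (EuclideanSpace ℝ (Fin d)), S ⊆ V ∧ S.card = m ∧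
      ∃ c : EuclideanSpace ℝ (Fin d) → Fin k,
        ∀ u ∈ S, ∀ v ∈ S, u ≠ v → dist u v ≤ r → c u ≠ c v} := by
  refine ⟨V.card, ?_⟩
  rintro m ⟨S, hS, rfl, -⟩
  exact Finset.card_le_card hS

lemma maxColorable_le_card (d k : ℕ) (r : ℝ)
    (V : Finset (EuclideanSpace ℝ (Fin d))) :
    maxColorable d k r V ≤ V.card := by
  refine csSup_le' ?_
  rintro m ⟨S, hS, rfl, -⟩
  exact Finset.card_le_card hS

lemma maxColorable_anti (d k : ℕ) {r₁ r₂ : ℝ} (h : r₁ ≤ r₂)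
    (V : Finset (EuclideanSpace ℝ (Fin d))) :
    maxColorable d k r₂ V ≤ maxColorable d k r₁ V := by
  refine csSup_le_csSup' (bddAbove_maxColorable_set d k r₁ V) ?_
  rintro m ⟨S, hS, hcard, c, hc⟩
  exact ⟨S, hS, hcard, c, fun u hu v hv huv hd => hc u hu v hv huv (hd.trans h)⟩

/-- The predicate used in the finitary description of `maxColorable`. -/
def Dcond (d k n : ℕ) (r : ℝ) (x : Fin n → EuclideanSpace ℝ (Fin d))
    (T : Finset (Fin n)) (c0 : Fin n → Fin k) : Prop :=
  (∀ i ∈ T, ∀ j ∈ T, i ≠ j → x i ≠ x j) ∧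
  (∀ i ∈ T, ∀ j ∈ T, x i ≠ x j → dist (x i) (x j) ≤ r → c0 i ≠ c0 j)

open Classical in
noncomputable def Ncal (d k n : ℕ) (r : ℝ)
    (x : Fin n → EuclideanSpace ℝ (Fin d)) : ℕ :=
  Finset.univ.sup (fun p : Finset (Fin n) × (Fin n → Fin k) =>
    if Dcond d k n r x p.1 p.2 then p.1.card else 0)

lemma Ncal_le (d k n : ℕ) (r : ℝ) (x : Fin n → EuclideanSpace ℝ (Fin d)) :
    Ncal d k n r x ≤ n := by
  refine Finset.sup_le fun p _ => ?_
  split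
  · simpa using Finset.card_le_univ p.1
  · exact Nat.zero_le n

lemma maxColorable_eq_Ncal (d k n : ℕ) (hk : 0 < k) (r : ℝ)
    (x : Fin n → EuclideanSpace ℝ (Fin d)) :
    maxColorable d k r (Finset.image x Finset.univ) = Ncal d k n r x := by
  classical
  apply le_antisymm
  · refine csSup_le' ?_
    rintro m ⟨S, hS, rfl, c, hc⟩
    rcases S.eq_empty_or_nonempty with rfl | ⟨y0, hy0⟩
    · simp
    have hn : Nonempty (Fin n) := by
      obtain ⟨i, -, -⟩ := Finset.mem_image.mp (hS hy0)
      exact ⟨i⟩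
    set g : EuclideanSpace ℝ (Fin d) → Fin n :=
      fun y => if h : ∃ i, x i = y then h.choose else Classical.arbitrary _ with hg
    have hxg : ∀ y ∈ S, x (g y) = y := by
      intro y hy
      obtain ⟨i, -, hi⟩ := Finset.mem_image.mp (hS hy)
      have h : ∃ i, x i = y := ⟨i, hi⟩
      simp only [hg, dif_pos h]
      exact h.choose_spec
    have hginj : Set.InjOn g S := by
      intro a ha b hb hab
      rw [← hxg a ha, ← hxg b hb, hab]
    set T : Finset (Fin n) := S.image g with hT
    have hcardT : T.card = S.card := Finset.card_image_of_injOn hginj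
    have hmemT : ∀ i ∈ T, ∃ a ∈ S, g a = i := by
      intro i hi; simpa using Finset.mem_image.mp hi
    have hD : Dcond d k n r x T (c ∘ x) := by
      constructor
      · intro i hi j hj hij
        obtain ⟨a, ha, rfl⟩ := hmemT i hi
        obtain ⟨b, hb, rfl⟩ := hmemT j hj
        rw [hxg a ha, hxg b hb]
        intro hab; exact hij (by rw [hab])
      · intro i hi j hj hne hdist
        obtain ⟨a, ha, rfl⟩ := hmemT i hi
        obtain ⟨b, hb, rfl⟩ := hmemT j hj
        simp only [Function.comp_apply]
        rw [hxg a ha, hxg b hb] at hne hdist ⊢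
        exact hc a ha b hb hne hdist
    calc S.card = T.card := hcardT.symm
      _ ≤ Ncal d k n r x := by
          have := Finset.le_sup (f := fun p : Finset (Fin n) × (Fin n → Fin k) =>
            if Dcond d k n r x p.1 p.2 then p.1.card else 0)
            (Finset.mem_univ (T, c ∘ x))
          rw [Ncal]
          convert this using 2
          exacts [rfl, by simp [hD]]
  · refine Finset.sup_le fun p _ => ?_
    split
    · rename_i hD
      obtain ⟨T, c0⟩ := p
      obtain ⟨hD1, hD2⟩ := hD
      have hxinj : Set.InjOn x T := by
        intro a ha b hb hab
        by_contra hne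
        exact hD1 a ha b hb hne hab
      set c : EuclideanSpace ℝ (Fin d) → Fin k :=
        fun y => if h : ∃ i, i ∈ T ∧ x i = y then c0 h.choose else ⟨0, hk⟩ with hcdef
      refine le_csSup (bddAbove_maxColorable_set d k r _) ?_
      refine ⟨Finset.image x T, Finset.image_subset_image (Finset.subset_univ T),
        Finset.card_image_of_injOn hxinj, c, ?_⟩
      intro u hu v hv huv hdist
      obtain ⟨a, ha, rfl⟩ := Finset.mem_image.mp hu
      obtain ⟨b, hb, rfl⟩ := Finset.mem_image.mp hv
      have h1 : ∃ i, i ∈ T ∧ x i = x a := ⟨a, ha, rfl⟩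
      have h2 : ∃ i, i ∈ T ∧ x i = x b := ⟨b, hb, rfl⟩
      have e1 : c (x a) = c0 h1.choose := by simp [hcdef, dif_pos h1]
      have e2 : c (x b) = c0 h2.choose := by simp [hcdef, dif_pos h2]
      rw [e1, e2]
      have s1 := h1.choose_spec
      have s2 := h2.choose_spec
      refine hD2 _ s1.1 _ s2.1 ?_ ?_
      · rw [s1.2, s2.2]; exact huv
      · rw [s1.2, s2.2]; exact hdist
    · exact Nat.zero_le _

lemma measurableSet_eqPt (d n : ℕ) (i j : Fin n) :
    MeasurableSet {x : Fin n → EuclideanSpace ℝ (Fin d) | x i = x j} := by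
  have h : {x : Fin n → EuclideanSpace ℝ (Fin d) | x i = x j} =
      (fun x : Fin n → EuclideanSpace ℝ (Fin d) => (x i, x j)) ⁻¹'
        {p : EuclideanSpace ℝ (Fin d) × EuclideanSpace ℝ (Fin d) | p.1 = p.2} := rfl
  rw [h]
  exact ((measurable_pi_apply i).prodMk (measurable_pi_apply j))
    (isClosed_eq continuous_fst continuous_snd).measurableSet

lemma measurableSet_distLe (d n : ℕ) (r : ℝ) (i j : Fin n) :
    MeasurableSet {x : Fin n → EuclideanSpace ℝ (Fin d) | dist (x i) (x j) ≤ r} :=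
  measurableSet_le ((measurable_pi_apply i).dist (measurable_pi_apply j)) measurable_const

lemma measurableSet_Dcond (d k n : ℕ) (r : ℝ) (T : Finset (Fin n)) (c0 : Fin n → Fin k) :
    MeasurableSet {x : Fin n → EuclideanSpace ℝ (Fin d) | Dcond d k n r x T c0} := by
  classical
  have hA : {x : Fin n → EuclideanSpace ℝ (Fin d) | Dcond d k n r x T c0} =
      (⋂ i, ⋂ j, {x : Fin n → EuclideanSpace ℝ (Fin d) |
        i ∈ T → j ∈ T → i ≠ j → x i ≠ x j}) ∩
      (⋂ i, ⋂ j, {x : Fin n → EuclideanSpace ℝ (Fin d) |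
        i ∈ T → j ∈ T → x i ≠ x j → dist (x i) (x j) ≤ r → c0 i ≠ c0 j}) := by
    ext x
    simp only [Dcond, Set.mem_inter_iff, Set.mem_iInter, Set.mem_setOf_eq]
    exact ⟨fun h => ⟨fun i j hi hj => h.1 i hi j hj, fun i j hi hj => h.2 i hi j hj⟩,
      fun h => ⟨fun i hi j hj => h.1 i j hi hj, fun i hi j hj => h.2 i j hi hj⟩⟩
  rw [hA]
  apply MeasurableSet.inter
  · refine MeasurableSet.iInter fun i => MeasurableSet.iInter fun j => ?_
    by_cases h : i ∈ T ∧ j ∈ T ∧ i ≠ j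
    · have : {x : Fin n → EuclideanSpace ℝ (Fin d) | i ∈ T → j ∈ T → i ≠ j → x i ≠ x j}
          = {x : Fin n → EuclideanSpace ℝ (Fin d) | x i = x j}ᶜ := by
        ext x; simp [h.1, h.2.1, h.2.2]
      rw [this]
      exact (measurableSet_eqPt d n i j).compl
    · have : {x : Fin n → EuclideanSpace ℝ (Fin d) | i ∈ T → j ∈ T → i ≠ j → x i ≠ x j}
          = Set.univ := by
        ext x; simp only [Set.mem_setOf_eq, Set.mem_univ, iff_true]
        intro h1 h2 h3; exact absurd ⟨h1, h2, h3⟩ h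
      rw [this]; exact MeasurableSet.univ
  · refine MeasurableSet.iInter fun i => MeasurableSet.iInter fun j => ?_
    by_cases h : i ∈ T ∧ j ∈ T ∧ c0 i = c0 j
    · have : {x : Fin n → EuclideanSpace ℝ (Fin d) |
          i ∈ T → j ∈ T → x i ≠ x j → dist (x i) (x j) ≤ r → c0 i ≠ c0 j}
          = {x : Fin n → EuclideanSpace ℝ (Fin d) | x i = x j} ∪
            {x : Fin n → EuclideanSpace ℝ (Fin d) | dist (x i) (x j) ≤ r}ᶜ := by
        ext x
        simp only [Set.mem_setOf_eq, Set.mem_union, Set.mem_compl_iff, h.1, h.2.1,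
          forall_true_left, h.2.2]
        tauto
      rw [this]
      exact (measurableSet_eqPt d n i j).union (measurableSet_distLe d n r i j).compl
    · have : {x : Fin n → EuclideanSpace ℝ (Fin d) |
          i ∈ T → j ∈ T → x i ≠ x j → dist (x i) (x j) ≤ r → c0 i ≠ c0 j}
          = Set.univ := by
        ext x; simp only [Set.mem_setOf_eq, Set.mem_univ, iff_true]
        intro h1 h2 _ _ h5; exact absurd ⟨h1, h2, h5⟩ h
      rw [this]; exact MeasurableSet.univ

lemma measurable_finset_sup {X ι : Type*} [MeasurableSpace X]
    (s : Finset ι) (F : ι → X → ℕ) (hF : ∀ i, Measurable (F i)) :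
    Measurable fun x => s.sup (fun i => F i x) := by
  classical
  induction s using Finset.induction with
  | empty => simp only [Finset.sup_empty]; exact measurable_const
  | insert _ _ hnotmem ih =>
    simp only [Finset.sup_insert]
    exact (hF _).max ih

lemma measurable_Ncal (d k n : ℕ) (r : ℝ) :
    Measurable fun x : Fin n → EuclideanSpace ℝ (Fin d) => Ncal d k n r x := by
  classical
  have h := measurable_finset_sup (Finset.univ : Finset (Finset (Fin n) × (Fin n → Fin k)))
    (fun p (y : Fin n → EuclideanSpace ℝ (Fin d)) =>
      if Dcond d k n r y p.1 p.2 then p.1.card else 0)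
    (fun p => Measurable.ite (measurableSet_Dcond d k n r p.1 p.2)
      measurable_const measurable_const)
  exact h

lemma volume_unitCube (d : ℕ) : volume (unitCube d) = 1 := by
  have hp := EuclideanSpace.volume_preserving_symm_measurableEquiv_toLp (Fin d)
  have hset : unitCube d = (MeasurableEquiv.toLp 2 (Fin d → ℝ)).symm ⁻¹'
      (Set.univ.pi fun _ : Fin d => Set.Icc (0 : ℝ) 1) := by
    ext x
    simp only [unitCube, Set.mem_setOf_eq, Set.mem_preimage, Set.mem_pi, Set.mem_univ,
      forall_true_left]
    rfl
  rw [hset, hp.measure_preimage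
    (MeasurableSet.univ_pi fun _ => measurableSet_Icc).nullMeasurableSet]
  rw [volume_pi_pi]
  simp [Real.volume_Icc]

instance isProb_uniformCube (d : ℕ) : IsProbabilityMeasure (uniformCube d) := by
  constructor
  rw [uniformCube, Measure.restrict_apply_univ, volume_unitCube]

instance isProb_piCube (d n : ℕ) :
    IsProbabilityMeasure (Measure.pi fun _ : Fin n => uniformCube d) := by
  infer_instance

lemma integrable_maxColorable (d k n : ℕ) (hk : 0 < k) (r : ℝ) :
    Integrable (fun x : Fin n → EuclideanSpace ℝ (Fin d) =>
      (maxColorable d k r (Finset.image x Finset.univ) : ℝ))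
      (Measure.pi fun _ => uniformCube d) := by
  have heq : (fun x : Fin n → EuclideanSpace ℝ (Fin d) =>
      (maxColorable d k r (Finset.image x Finset.univ) : ℝ)) =
      fun x => ((Ncal d k n r x : ℕ) : ℝ) := by
    funext x; rw [maxColorable_eq_Ncal d k n hk r x]
  rw [heq]
  refine (integrable_const ((n : ℝ))).mono' ?_ ?_
  · exact (measurable_from_top.comp (measurable_Ncal d k n r)).aestronglyMeasurable
  · refine ae_of_all _ fun x => ?_
    rw [Real.norm_eq_abs, abs_of_nonneg (Nat.cast_nonneg _)]
    exact_mod_cast Ncal_le d k n r x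

lemma EH_nonneg (d k : ℕ) (r : ℝ) (n : ℕ) : 0 ≤ EH d k r n :=
  integral_nonneg fun x => Nat.cast_nonneg _

lemma EH_le (d k n : ℕ) (hk : 0 < k) (r : ℝ) : EH d k r n ≤ n := by
  rw [EH]
  calc ∫ x : Fin n → EuclideanSpace ℝ (Fin d),
        (maxColorable d k r (Finset.image x Finset.univ) : ℝ)
        ∂(Measure.pi fun _ => uniformCube d)
      ≤ ∫ _ : Fin n → EuclideanSpace ℝ (Fin d), (n : ℝ)
        ∂(Measure.pi fun _ => uniformCube d) := by
        refine integral_mono (integrable_maxColorable d k n hk r) (integrable_const _)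
          fun x => ?_
        have h1 : maxColorable d k r (Finset.image x Finset.univ) ≤
            (Finset.image x Finset.univ).card := maxColorable_le_card d k r _
        have h2 : (Finset.image x Finset.univ).card ≤ n := by
          simpa using Finset.card_image_le (s := (Finset.univ : Finset (Fin n))) (f := x)
        exact Nat.cast_le.mpr (h1.trans h2)
    _ = (n : ℝ) := by simp

lemma EH_anti (d k n : ℕ) (hk : 0 < k) {r₁ r₂ : ℝ} (h : r₁ ≤ r₂) :
    EH d k r₂ n ≤ EH d k r₁ n := by
  refine integral_mono (integrable_maxColorable d k n hk r₂)
    (integrable_maxColorable d k n hk r₁) fun x => ?_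
  exact Nat.cast_le.mpr (maxColorable_anti d k h _)

lemma summable_poisson_EH (d k : ℕ) (hk : 0 < k) (μ : NNReal) (r : ℝ) :
    Summable fun n : ℕ => poissonPMFReal μ n * EH d k r n := by
  refine Summable.of_nonneg_of_le
    (fun n => mul_nonneg poissonPMFReal_nonneg (EH_nonneg d k r n))
    (fun n => ?_)
    (((Real.summable_pow_div_factorial (2 * (μ : ℝ))).mul_left (Real.exp (-(μ : ℝ)))))
  have h1 : poissonPMFReal μ n * EH d k r n ≤ poissonPMFReal μ n * n :=
    mul_le_mul_of_nonneg_left (EH_le d k n hk r) poissonPMFReal_nonneg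
  refine h1.trans ?_
  rw [poissonPMFReal]
  have hb : (μ : ℝ) ^ n * n ≤ (2 * (μ : ℝ)) ^ n := by
    calc (μ : ℝ) ^ n * n ≤ (μ : ℝ) ^ n * 2 ^ n := by
          refine mul_le_mul_of_nonneg_left ?_ (by positivity)
          exact_mod_cast (Nat.lt_two_pow_self (n := n)).le
      _ = (2 * (μ : ℝ)) ^ n := by rw [mul_pow]; ring
  calc Real.exp (-(μ : ℝ)) * (μ : ℝ) ^ n / (n.factorial : ℝ) * n
      = Real.exp (-(μ : ℝ)) * (((μ : ℝ) ^ n * n) / (n.factorial : ℝ)) := by ring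
    _ ≤ Real.exp (-(μ : ℝ)) * ((2 * (μ : ℝ)) ^ n / (n.factorial : ℝ)) := by gcongr

lemma EF_nonneg (d k : ℕ) (lam t : ℝ) : 0 ≤ EF d k lam t :=
  tsum_nonneg fun n => mul_nonneg poissonPMFReal_nonneg (EH_nonneg d k _ n)

lemma Fbar_nonneg (d k : ℕ) {lam t : ℝ} (hlam : 0 ≤ lam) (ht : 0 ≤ t) :
    0 ≤ Fbar d k lam t :=
  div_nonneg (EF_nonneg d k lam t) (by positivity)


/-- `a_{k,λ(1+ε)} ≤ a_{k,λ} + ε`. -/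
theorem aConst_le (d k : ℕ) (hd : 1 ≤ d) (hk : 1 ≤ k) (lam : ℝ) (hlam : 0 < lam)
    (ε : ℝ) (hε : 0 < ε) :
    aConst d k (lam * (1 + ε)) ≤ aConst d k lam + ε := by
  have hk' : 0 < k := hk
  set lam' := lam * (1 + ε) with hlam'def
  have hlam' : 0 < lam' := by positivity
  have hbdd : BddBelow {x : ℝ | ∃ t : ℝ, 0 < t ∧ x = Fbar d k lam' t} := by
    refine ⟨0, ?_⟩
    rintro y ⟨u, hu, rfl⟩
    exact Fbar_nonneg d k hlam'.le hu.le
  have key : ∀ s : ℝ, 0 < s → aConst d k lam' ≤ Fbar d k lam s := by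
    intro s hs
    set θ : ℝ := (1 + ε) ^ ((d : ℝ)⁻¹) with hθdef
    have hθpos : 0 < θ := Real.rpow_pos_of_pos (by linarith) _
    have hθ1 : 1 ≤ θ := by
      calc (1 : ℝ) = (1 : ℝ) ^ ((d : ℝ)⁻¹) := (Real.one_rpow _).symm
        _ ≤ θ := Real.rpow_le_rpow (by norm_num) (by linarith) (by positivity)
    set t : ℝ := s / θ with htdef
    have ht : 0 < t := by positivity
    have hθd : θ ^ d = 1 + ε := by
      rw [hθdef, ← Real.rpow_natCast ((1 + ε) ^ ((d : ℝ)⁻¹)) d,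
        ← Real.rpow_mul (by linarith)]
      rw [inv_mul_cancel₀ (Nat.cast_ne_zero.mpr (by omega) : (d : ℝ) ≠ 0)]
      exact Real.rpow_one _
    have h1 : lam' * t ^ d = lam * s ^ d := by
      rw [htdef, div_pow, hθd, hlam'def]
      field_simp
    have hts : t ≤ s := by
      rw [htdef]
      exact div_le_self hs.le hθ1
    have hrad : 1 / s ≤ 1 / t := one_div_le_one_div_of_le ht hts
    have h3 : EF d k lam' t ≤ EF d k lam s := by
      rw [EF, EF, h1]
      exact Summable.tsum_le_tsum
        (fun n => mul_le_mul_of_nonneg_left (EH_anti d k n hk' hrad) poissonPMFReal_nonneg)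
        (summable_poisson_EH d k hk' _ _) (summable_poisson_EH d k hk' _ _)
    have h4 : Fbar d k lam' t ≤ Fbar d k lam s := by
      rw [Fbar, Fbar, h1]
      exact div_le_div_of_nonneg_right h3 (by positivity) |>.trans_eq rfl
    calc aConst d k lam' ≤ Fbar d k lam' t := csInf_le hbdd ⟨t, ht, rfl⟩
      _ ≤ Fbar d k lam s := h4
  have h5 : aConst d k lam' ≤ aConst d k lam := by
    refine le_csInf ⟨Fbar d k lam 1, 1, one_pos, rfl⟩ ?_
    rintro b ⟨s, hs, rfl⟩
    exact key s hs
  linarith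
end
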